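/- arXiv:1110.4065 — 9 statements merged into one kernel-verified Lean document; each statement's English description precedes it below -/
import Mathlib

section
/- Let c > 0. Then there exists a sequence (a_j)_{j≥0} of real numbers such that the function φ₁(t) := ∫_ℝ e^{−tλ²}/(λ² + c²) dλ admits the asymptotic expansion φ₁(t) ∼ Σ_{j=0}^∞ a_j t^{j/2} as t → 0⁺; precisely, for every N ∈ ℕ there is a constant C_N > 0 such that |φ₁(t) − Σ_{j=0}^N a_j t^{j/2}| ≤ C_N t^{(N+1)/2} for all t ∈ (0,1]. -/
open MeasureTheory Real Set Nat Filter Topology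
open scoped ContDiff

lemma expansion_aux (f : ℝ → ℝ) (hf : ContDiff ℝ (⊤ : ℕ∞) f) :
    ∃ a : ℕ → ℝ, ∀ N : ℕ, ∃ C : ℝ, 0 < C ∧ ∀ t ∈ Set.Ioc (0:ℝ) 1,
      |f (Real.sqrt t) - ∑ j ∈ Finset.range (N + 1), a j * t ^ ((j : ℝ) / 2)| ≤
      C * t ^ (((N : ℝ) + 1) / 2) := by
  refine ⟨fun j => (j ! : ℝ)⁻¹ * iteratedDerivWithin j f (Icc 0 1) 0, fun N => ?_⟩
  have hfN : ContDiffOn ℝ ((N:ℕ)+1) f (Icc (0:ℝ) 1) :=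
    ContDiff.contDiffOn (hf.of_le (by exact_mod_cast (le_top : ((N:ℕ∞)+1) ≤ ⊤)))
  obtain ⟨C, hC⟩ := exists_taylor_mean_remainder_bound (zero_le_one) hfN
  refine ⟨max C 1, lt_of_lt_of_le one_pos (le_max_right _ _), fun t ht => ?_⟩
  have ht0 : 0 < t := ht.1
  have hst : Real.sqrt t ∈ Icc (0:ℝ) 1 := by
    refine ⟨Real.sqrt_nonneg t, ?_⟩
    rw [show (1:ℝ) = Real.sqrt 1 by simp]
    exact Real.sqrt_le_sqrt ht.2
  have hpow : ∀ j : ℕ, Real.sqrt t ^ j = t ^ ((j : ℝ) / 2) := by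
    intro j
    rw [Real.sqrt_eq_rpow, ← Real.rpow_natCast (t ^ ((1:ℝ)/2)) j, ← Real.rpow_mul ht0.le]
    congr 1; ring
  have hsum : taylorWithinEval f N (Icc 0 1) 0 (Real.sqrt t)
      = ∑ j ∈ Finset.range (N + 1),
        ((j ! : ℝ)⁻¹ * iteratedDerivWithin j f (Icc 0 1) 0) * t ^ ((j : ℝ) / 2) := by
    rw [taylor_within_apply]
    refine Finset.sum_congr rfl fun j _ => ?_
    rw [smul_eq_mul, sub_zero, hpow j]
    ring
  have key2 := hC (Real.sqrt t) hst
  rw [hsum, Real.norm_eq_abs] at key2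
  refine key2.trans ?_
  rw [sub_zero, show Real.sqrt t ^ (N+1) = t ^ (((N:ℝ)+1)/2) by
      rw [hpow (N+1)]; congr 1; push_cast; ring]
  exact mul_le_mul_of_nonneg_right (le_max_left _ _) (by positivity)

noncomputable def gg (c s : ℝ) : ℝ := ∫ v in (0:ℝ)..s, Real.exp (-c^2 * v^2)

lemma cont_den (c : ℝ) (hc : 0 < c) {t : ℝ} :
    Continuous fun l : ℝ => Real.exp (-t * l^2) / (l^2 + c^2) := by
  apply Continuous.div
  · continuity
  · continuity
  · intro l; positivity

lemma int1 (c : ℝ) (hc : 0 < c) {t : ℝ} (ht : 0 < t) :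
    Integrable fun l : ℝ => Real.exp (-t * l^2) / (l^2 + c^2) := by
  refine Integrable.mono' ((integrable_exp_neg_mul_sq ht).div_const (c^2))
    (cont_den c hc).aestronglyMeasurable ?_
  filter_upwards with l
  rw [Real.norm_eq_abs, abs_of_nonneg (by positivity)]
  gcongr <;> nlinarith [sq_nonneg l, pow_pos hc 2]

lemma phi_hasDeriv (c : ℝ) (hc : 0 < c) {t : ℝ} (ht : 0 < t) :
    HasDerivAt (fun x => ∫ l : ℝ, Real.exp (-x * l^2) / (l^2 + c^2))
      (c^2 * (∫ l : ℝ, Real.exp (-t * l^2) / (l^2 + c^2)) - Real.sqrt (π / t)) t := by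
  have hb : Integrable (fun l : ℝ => Real.exp (-(t/2) * l^2)) :=
    integrable_exp_neg_mul_sq (by linarith)
  have main := hasDerivAt_integral_of_dominated_loc_of_deriv_le (μ := volume)
    (F := fun x (l : ℝ) => Real.exp (-x * l^2) / (l^2 + c^2))
    (F' := fun x (l : ℝ) => -(l^2 * Real.exp (-x * l^2)) / (l^2 + c^2))
    (x₀ := t) (bound := fun l : ℝ => Real.exp (-(t/2) * l^2))
    (Metric.ball_mem_nhds t (half_pos ht))
    (Filter.Eventually.of_forall fun x => (cont_den c hc).aestronglyMeasurable)
    (int1 c hc ht)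
    (by
      apply Continuous.aestronglyMeasurable
      apply Continuous.div
      · continuity
      · continuity
      · intro l; positivity)
    (by
      filter_upwards with l
      intro x hx
      have hx2 : t/2 ≤ x := by
        have := abs_lt.mp (by simpa [Real.dist_eq] using hx)
        linarith [this.1]
      rw [Real.norm_eq_abs, abs_div, abs_neg, abs_of_nonneg (by positivity),
        abs_of_nonneg (by positivity)]
      calc l^2 * Real.exp (-x * l^2) / (l^2 + c^2)
          ≤ (l^2 + c^2) * Real.exp (-x * l^2) / (l^2 + c^2) := by
            gcongr; nlinarith
        _ = Real.exp (-x * l^2) := by field_simp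
        _ ≤ Real.exp (-(t/2) * l^2) := by
            apply Real.exp_le_exp.mpr; nlinarith [sq_nonneg l])
    hb
    (by
      filter_upwards with l
      intro x hx
      have h1 : HasDerivAt (fun x : ℝ => -x * l^2) (-l^2) x := by
        simpa using ((hasDerivAt_id x).neg.mul_const (l^2))
      have h2 := (h1.exp).div_const (l^2 + c^2)
      refine h2.congr_deriv ?_
      ring)
  refine main.2.congr_deriv ?_
  have hpt : ∀ l : ℝ, -(l^2 * Real.exp (-t * l^2)) / (l^2 + c^2)
      = c^2 * (Real.exp (-t * l^2) / (l^2 + c^2)) - Real.exp (-t * l^2) := by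
    intro l
    have h : l^2 + c^2 ≠ 0 := by positivity
    field_simp
    ring
  rw [show (fun l : ℝ => -(l^2 * Real.exp (-t * l^2)) / (l^2 + c^2))
      = fun l : ℝ => c^2 * (Real.exp (-t * l^2) / (l^2 + c^2)) - Real.exp (-t * l^2)
      from funext hpt]
  rw [integral_sub ((int1 c hc ht).const_mul _) (integrable_exp_neg_mul_sq ht),
    integral_const_mul, integral_gaussian]

lemma g_hasDerivAt (c : ℝ) (s : ℝ) :
    HasDerivAt (fun s : ℝ => ∫ v in (0:ℝ)..s, Real.exp (-c^2 * v^2))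
      (Real.exp (-c^2 * s^2)) s := by
  have hcont : Continuous (fun v : ℝ => Real.exp (-c^2 * v^2)) := by continuity
  exact intervalIntegral.integral_hasDerivAt_right
    (hcont.intervalIntegrable _ _)
    (hcont.stronglyMeasurableAtFilter _ _)
    hcont.continuousAt

lemma D_hasDeriv (c : ℝ) (hc : 0 < c) {t : ℝ} (ht : 0 < t) :
    HasDerivAt (fun u => Real.exp (-c^2*u) * (∫ l : ℝ, Real.exp (-u * l^2) / (l^2 + c^2))
      - (π/c - 2 * Real.sqrt π * gg c (Real.sqrt u))) 0 t := by
  have h1 : HasDerivAt (fun u : ℝ => Real.exp (-c^2*u)) (-c^2 * Real.exp (-c^2*t)) t := by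
    have : HasDerivAt (fun u : ℝ => -c^2*u) (-c^2) t := by
      simpa using (hasDerivAt_id t).const_mul (-c^2)
    simpa [mul_comm] using this.exp
  have h3 := h1.mul (phi_hasDeriv c hc ht)
  have h4 : HasDerivAt Real.sqrt (1/(2*Real.sqrt t)) t := hasDerivAt_sqrt ht.ne'
  have h5 := (g_hasDerivAt c (Real.sqrt t)).comp t h4
  rw [Real.sq_sqrt ht.le] at h5
  have h6 := ((h5.const_mul (2 * Real.sqrt π)).const_sub (π/c))
  have h7 := h3.sub h6
  refine h7.congr_deriv ?_
  rw [Real.sqrt_div pi_pos.le]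
  have hst : Real.sqrt t ≠ 0 := by positivity
  field_simp
  ring

lemma D_eq (c : ℝ) (hc : 0 < c) {t : ℝ} (ht : 0 < t) :
    Real.exp (-c^2*t) * (∫ l : ℝ, Real.exp (-t * l^2) / (l^2 + c^2))
      = π/c - 2 * Real.sqrt π * gg c (Real.sqrt t) := by
  set D : ℝ → ℝ := fun u => Real.exp (-c^2*u) * (∫ l : ℝ, Real.exp (-u * l^2) / (l^2 + c^2))
      - (π/c - 2 * Real.sqrt π * gg c (Real.sqrt u)) with hD
  have hconst : ∀ u, t ≤ u → D u = D t := by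
    intro u hu
    have h := constant_of_has_deriv_right_zero (f := D) (a := t) (b := u)
      (fun x hx => ((D_hasDeriv c hc (lt_of_lt_of_le ht hx.1)).continuousAt).continuousWithinAt)
      (fun x hx => ((D_hasDeriv c hc (lt_of_lt_of_le ht hx.1)).hasDerivWithinAt))
    exact h u (right_mem_Icc.mpr hu)
  -- limit of first part
  have hc2 : (0:ℝ) < c^2 := pow_pos hc 2
  have T1 : Tendsto (fun u => Real.exp (-c^2*u) *
      (∫ l : ℝ, Real.exp (-u * l^2) / (l^2 + c^2))) atTop (𝓝 0) := by
    have hub : ∀ u : ℝ, 1 ≤ u → Real.exp (-c^2*u) *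
        (∫ l : ℝ, Real.exp (-u * l^2) / (l^2 + c^2)) ≤ Real.exp (-c^2*u) * (Real.sqrt π / c^2) := by
      intro u hu
      have hu0 : (0:ℝ) < u := by linarith
      have hphi : (∫ l : ℝ, Real.exp (-u * l^2) / (l^2 + c^2)) ≤ Real.sqrt π / c^2 := by
        have step1 : (∫ l : ℝ, Real.exp (-u * l^2) / (l^2 + c^2))
            ≤ ∫ l : ℝ, Real.exp (-u * l^2) / c^2 := by
          apply integral_mono (int1 c hc hu0) ((integrable_exp_neg_mul_sq hu0).div_const _)
          intro l
          show Real.exp (-u * l^2) / (l^2 + c^2) ≤ Real.exp (-u * l^2) / c^2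
          gcongr <;> nlinarith [sq_nonneg l, pow_pos hc 2]
        have step2 : (∫ l : ℝ, Real.exp (-u * l^2) / c^2) = Real.sqrt (π/u) / c^2 := by
          rw [integral_div, integral_gaussian]
        rw [step2] at step1
        refine step1.trans ?_
        have h9 : π / u ≤ π := by
          rw [div_le_iff₀ hu0]; nlinarith [pi_pos]
        exact div_le_div₀ (Real.sqrt_nonneg _) (Real.sqrt_le_sqrt h9) hc2 le_rfl
      exact mul_le_mul_of_nonneg_left hphi (Real.exp_nonneg _)
    have hlb : ∀ u : ℝ, 0 ≤ Real.exp (-c^2*u) *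
        (∫ l : ℝ, Real.exp (-u * l^2) / (l^2 + c^2)) := by
      intro u
      apply mul_nonneg (Real.exp_nonneg _)
      apply integral_nonneg
      intro l
      positivity
    have hg0 : Tendsto (fun u : ℝ => Real.exp (-c^2*u) * (Real.sqrt π / c^2)) atTop (𝓝 0) := by
      have he : Tendsto (fun u : ℝ => Real.exp (-c^2*u)) atTop (𝓝 0) := by
        have := Real.tendsto_exp_neg_atTop_nhds_zero.comp
          (Tendsto.const_mul_atTop hc2 tendsto_id)
        refine this.congr fun u => ?_
        simp [Function.comp]
      simpa using he.mul_const (Real.sqrt π / c^2)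
    apply squeeze_zero' (Filter.Eventually.of_forall hlb)
      ((eventually_ge_atTop (1:ℝ)).mono fun u hu => hub u hu) hg0
  have T2 : Tendsto (fun u => π/c - 2 * Real.sqrt π * gg c (Real.sqrt u)) atTop (𝓝 0) := by
    have hsq : Tendsto Real.sqrt atTop atTop :=
      (tendsto_rpow_atTop (by norm_num : (0:ℝ) < 1/2)).congr'
        ((eventually_ge_atTop (0:ℝ)).mono fun x hx => (Real.sqrt_eq_rpow x).symm)
    have hgg : Tendsto (fun u => gg c (Real.sqrt u)) atTop (𝓝 (Real.sqrt π / (2*c))) := by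
      have hint : IntegrableOn (fun v : ℝ => Real.exp (-c^2 * v^2)) (Ioi 0) :=
        (integrable_exp_neg_mul_sq hc2).integrableOn
      have h := intervalIntegral_tendsto_integral_Ioi 0 hint hsq
      have hval : (∫ x in Ioi (0:ℝ), Real.exp (-c^2 * x^2)) = Real.sqrt π / (2*c) := by
        rw [integral_gaussian_Ioi, Real.sqrt_div pi_pos.le, Real.sqrt_sq hc.le]
        ring
      rw [hval] at h
      exact h
    have := (hgg.const_mul (2 * Real.sqrt π)).const_sub (π/c)
    convert this using 2
    rw [show 2 * Real.sqrt π * (Real.sqrt π / (2*c)) = (Real.sqrt π * Real.sqrt π) / c by ring,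
      Real.mul_self_sqrt pi_pos.le]
    ring
  have TD : Tendsto D atTop (𝓝 0) := by
    simpa only [sub_zero] using T1.sub T2
  have TD' : Tendsto D atTop (𝓝 (D t)) := by
    refine Tendsto.congr' ?_ tendsto_const_nhds
    exact (eventually_ge_atTop t).mono fun u hu => (hconst u hu).symm
  have : D t = 0 := tendsto_nhds_unique TD' TD
  rw [hD] at this
  linarith [this]

lemma g_smooth (c : ℝ) :
    ContDiff ℝ (⊤ : ℕ∞) (fun s : ℝ => ∫ v in (0:ℝ)..s, Real.exp (-c^2 * v^2)) := by
  rw [show (((⊤:ℕ∞) : WithTop ℕ∞)) = ∞ from rfl, contDiff_infty_iff_deriv]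
  constructor
  · exact fun s => (g_hasDerivAt c s).differentiableAt
  · have : deriv (fun s : ℝ => ∫ v in (0:ℝ)..s, Real.exp (-c^2 * v^2))
        = fun s => Real.exp (-c^2 * s^2) := funext fun s => (g_hasDerivAt c s).deriv
    rw [this]
    exact (Real.contDiff_exp.comp (contDiff_const.mul (contDiff_id.pow 2))).of_le le_top

lemma f_smooth (c : ℝ) :
    ContDiff ℝ (⊤ : ℕ∞) (fun s : ℝ => Real.exp (c^2 * s^2) *
      (π / c - 2 * Real.sqrt π * gg c s)) := by
  refine ContDiff.mul ?_ ?_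
  · exact Real.contDiff_exp.comp (contDiff_const.mul (contDiff_id.pow 2))
  · exact contDiff_const.sub (contDiff_const.mul (g_smooth c))

/-- Lemma `Lemas1`: the function `φ₁(t) = ∫_ℝ e^{-tλ²}/(λ²+c²) dλ` admits an asymptotic
expansion in powers `t^{j/2}` as `t → 0⁺`. -/
theorem stmt0 (c : ℝ) (hc : 0 < c) :
    ∃ a : ℕ → ℝ, ∀ N : ℕ, ∃ C : ℝ, 0 < C ∧ ∀ t ∈ Set.Ioc (0:ℝ) 1,
      |(∫ l : ℝ, Real.exp (-t * l ^ 2) / (l ^ 2 + c ^ 2)) -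
        ∑ j ∈ Finset.range (N + 1), a j * t ^ ((j : ℝ) / 2)| ≤
      C * t ^ (((N : ℝ) + 1) / 2) := by
  obtain ⟨a, ha⟩ := expansion_aux
    (fun s : ℝ => Real.exp (c^2 * s^2) * (π / c - 2 * Real.sqrt π * gg c s)) (f_smooth c)
  refine ⟨a, fun N => ?_⟩
  obtain ⟨C, hC, hbound⟩ := ha N
  refine ⟨C, hC, fun t ht => ?_⟩
  have hident : (∫ l : ℝ, Real.exp (-t * l ^ 2) / (l ^ 2 + c ^ 2))
      = Real.exp (c^2 * (Real.sqrt t)^2) * (π / c - 2 * Real.sqrt π * gg c (Real.sqrt t)) := by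
    rw [Real.sq_sqrt ht.1.le, ← D_eq c hc ht.1, ← mul_assoc, ← Real.exp_add,
      show c^2 * t + -c^2 * t = 0 by ring, Real.exp_zero, one_mul]
  rw [hident]
  exact hbound t ht
end

section
/- For every c > 0 and every t > 0 one has ∫_ℝ e^{−tλ²}/(λ² + c²) dλ = e^{tc²} ( π/c − √π ∫₀^t e^{−sc²} s^{−1/2} ds ). -/
set_option maxHeartbeats 1000000


open MeasureTheory Real Set

lemma aux_integral_exp_neg_mul_Ioi {a : ℝ} (ha : 0 < a) (t : ℝ) :
    ∫ s in Ioi t, Real.exp (-(a * s)) = Real.exp (-(a * t)) / a := by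
  have h := MeasureTheory.integral_comp_mul_left_Ioi (fun x => Real.exp (-x)) t ha
  simp only [smul_eq_mul] at h
  rw [h, integral_exp_neg_Ioi]
  ring

/-- The exact identity from the proof of Lemma `Lemas1`:
`∫_ℝ e^{-tλ²}/(λ²+c²) dλ = e^{tc²} (π/c - √π ∫₀ᵗ e^{-sc²} s^{-1/2} ds)`. -/
theorem stmt1 (c t : ℝ) (hc : 0 < c) (ht : 0 < t) :
    (∫ l : ℝ, Real.exp (-t * l ^ 2) / (l ^ 2 + c ^ 2)) =
      Real.exp (t * c ^ 2) *
        (Real.pi / c -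
          Real.sqrt Real.pi * ∫ s in (0:ℝ)..t, Real.exp (-s * c ^ 2) * s ^ (-(1:ℝ)/2)) := by
  have hc2 : 0 < c ^ 2 := by positivity
  set g : ℝ → ℝ := fun s => Real.exp (-s * c ^ 2) * s ^ (-(1:ℝ)/2) with hg
  -- integrability of `g` on `Ioi 0`
  have hgint : IntegrableOn g (Ioi 0) := by
    have h := integrableOn_rpow_mul_exp_neg_mul_rpow
      (p := 1) (s := (-(1:ℝ)/2)) (b := c ^ 2) (by norm_num) one_pos hc2
    refine h.congr_fun (fun x hx => ?_) measurableSet_Ioi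
    beta_reduce
    rw [Real.rpow_one, show -c ^ 2 * x = -x * c ^ 2 by ring, mul_comm]
  -- value of the full integral, via the Gamma function
  have hgamma : ∫ s in Ioi 0, g s = Real.sqrt Real.pi / c := by
    have h := Real.integral_rpow_mul_exp_neg_mul_Ioi (a := (1:ℝ)/2) (r := c ^ 2)
      (by norm_num) hc2
    rw [Real.Gamma_one_half_eq] at h
    have hcongr : ∫ s in Ioi 0, g s
        = ∫ s in Ioi 0, s ^ ((1:ℝ)/2 - 1) * Real.exp (-(c ^ 2 * s)) := by
      refine setIntegral_congr_fun measurableSet_Ioi (fun x hx => ?_)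
      rw [show ((1:ℝ)/2 - 1) = (-(1:ℝ)/2) by norm_num,
        show -(c ^ 2 * x) = -x * c ^ 2 by ring, mul_comm]
    rw [hcongr, h, show ((1:ℝ)/c^2) = (c^2)⁻¹ by ring, ← Real.sqrt_eq_rpow,
      Real.sqrt_inv, Real.sqrt_sq hc.le]
    ring
  -- pointwise rewriting of the integrand
  have hA : ∀ l : ℝ, Real.exp (-t * l ^ 2) / (l ^ 2 + c ^ 2)
      = Real.exp (t * c ^ 2) * ∫ s in Ioi t, Real.exp (-((l ^ 2 + c ^ 2) * s)) := by
    intro l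
    have ha : 0 < l ^ 2 + c ^ 2 := by positivity
    rw [aux_integral_exp_neg_mul_Ioi ha t, mul_div_assoc', ← Real.exp_add]
    congr 2
    ring
  -- Fubini
  have hcont : Continuous (fun z : ℝ × ℝ => Real.exp (-((z.1 ^ 2 + c ^ 2) * z.2))) := by
    fun_prop
  have hswap : (∫ l : ℝ, ∫ s in Ioi t, Real.exp (-((l ^ 2 + c ^ 2) * s)))
      = ∫ s in Ioi t, ∫ l : ℝ, Real.exp (-((l ^ 2 + c ^ 2) * s)) := by
    apply MeasureTheory.integral_integral_swap
    refine (integrable_prod_iff ?_).2 ⟨?_, ?_⟩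
    · exact hcont.aestronglyMeasurable
    · simp only [Function.uncurry]
      refine ae_of_all _ (fun l => ?_)
      have := exp_neg_integrableOn_Ioi t (show (0:ℝ) < l ^ 2 + c ^ 2 by positivity)
      refine this.congr_fun (fun x _ => ?_) measurableSet_Ioi
      congr 1
      ring
    · simp only [Function.uncurry]
      have heq : ∀ l : ℝ, (∫ s in Ioi t, ‖Real.exp (-((l ^ 2 + c ^ 2) * s))‖)
          = Real.exp (-((l ^ 2 + c ^ 2) * t)) / (l ^ 2 + c ^ 2) := by
        intro l
        simp only [Real.norm_eq_abs, Real.abs_exp]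
        exact aux_integral_exp_neg_mul_Ioi (by positivity) t
      rw [show (fun l : ℝ => ∫ s in Ioi t, ‖Real.exp (-((l ^ 2 + c ^ 2) * s))‖)
          = fun l : ℝ => Real.exp (-((l ^ 2 + c ^ 2) * t)) / (l ^ 2 + c ^ 2)
          from funext heq]
      refine Integrable.mono' (g := fun l : ℝ =>
          Real.exp (-t * c ^ 2) / c ^ 2 * Real.exp (-t * l ^ 2))
        ((integrable_exp_neg_mul_sq ht).const_mul _) ?_ (ae_of_all _ fun l => ?_)
      · exact (Continuous.div (by fun_prop) (by fun_prop)
          (fun l => by positivity)).aestronglyMeasurable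
      · rw [Real.norm_eq_abs, abs_of_nonneg (by positivity),
          show Real.exp (-((l ^ 2 + c ^ 2) * t)) = Real.exp (-t * c ^ 2) * Real.exp (-t * l ^ 2)
            from by rw [← Real.exp_add]; congr 1; ring]
        have hle : Real.exp (-t * c ^ 2) * Real.exp (-t * l ^ 2) / (l ^ 2 + c ^ 2)
            ≤ Real.exp (-t * c ^ 2) * Real.exp (-t * l ^ 2) / c ^ 2 := by
          gcongr
          exact le_add_of_nonneg_left (by positivity)
        refine hle.trans_eq ?_
        show _ = Real.exp (-t * c ^ 2) / c ^ 2 * Real.exp (-t * l ^ 2)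
        ring
  -- inner Gaussian integral
  have hinner : ∀ s ∈ Ioi t, (∫ l : ℝ, Real.exp (-((l ^ 2 + c ^ 2) * s)))
      = g s * Real.sqrt Real.pi := by
    intro s hs
    have hs0 : 0 < s := ht.trans hs
    have hrw : (fun l : ℝ => Real.exp (-((l ^ 2 + c ^ 2) * s)))
        = fun l : ℝ => Real.exp (-s * c ^ 2) * Real.exp (-s * l ^ 2) := by
      funext l; rw [← Real.exp_add]; congr 1; ring
    rw [hrw, integral_const_mul, integral_gaussian,
      Real.sqrt_div Real.pi_pos.le]
    have : s ^ (-(1:ℝ)/2) = (Real.sqrt s)⁻¹ := by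
      rw [show (-(1:ℝ)/2) = -(1/2 : ℝ) by norm_num, Real.rpow_neg hs0.le,
        ← Real.sqrt_eq_rpow]
    rw [hg]
    simp only [this]
    field_simp
  -- splitting the integral over `Ioi 0`
  have hsplit : ∫ s in Ioi 0, g s = (∫ s in (0:ℝ)..t, g s) + ∫ s in Ioi t, g s := by
    rw [intervalIntegral.integral_of_le ht.le,
      ← MeasureTheory.setIntegral_union (Ioc_disjoint_Ioi le_rfl) measurableSet_Ioi
        (hgint.mono_set Ioc_subset_Ioi_self) (hgint.mono_set (Ioi_subset_Ioi ht.le)),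
      Ioc_union_Ioi_eq_Ioi ht.le]
  -- assemble
  have hIoi : ∫ s in Ioi t, g s = Real.sqrt Real.pi / c - ∫ s in (0:ℝ)..t, g s := by
    rw [← hgamma, hsplit]; ring
  calc (∫ l : ℝ, Real.exp (-t * l ^ 2) / (l ^ 2 + c ^ 2))
      = ∫ l : ℝ, Real.exp (t * c ^ 2) * ∫ s in Ioi t, Real.exp (-((l ^ 2 + c ^ 2) * s)) := by
        exact integral_congr_ae (ae_of_all _ hA)
    _ = Real.exp (t * c ^ 2) * ∫ l : ℝ, ∫ s in Ioi t, Real.exp (-((l ^ 2 + c ^ 2) * s)) :=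
        integral_const_mul _ _
    _ = Real.exp (t * c ^ 2) * ∫ s in Ioi t, ∫ l : ℝ, Real.exp (-((l ^ 2 + c ^ 2) * s)) := by
        rw [hswap]
    _ = Real.exp (t * c ^ 2) * ∫ s in Ioi t, g s * Real.sqrt Real.pi := by
        rw [setIntegral_congr_fun measurableSet_Ioi hinner]
    _ = Real.exp (t * c ^ 2) * ((∫ s in Ioi t, g s) * Real.sqrt Real.pi) := by
        rw [integral_mul_const]
    _ = Real.exp (t * c ^ 2) *
        (Real.pi / c - Real.sqrt Real.pi * ∫ s in (0:ℝ)..t, g s) := by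
        rw [hIoi]
        have h2 : Real.sqrt Real.pi * Real.sqrt Real.pi = Real.pi :=
          Real.mul_self_sqrt Real.pi_pos.le
        field_simp
        linear_combination h2
end

section
/- For every j > 0 and every s ∈ ℂ with Re(s) > 0 one has (j/π) ∫₀^∞ t^{s−1} e^{−tj²} ( ∫_ℝ e^{−tλ²}/(λ² + j²) dλ ) dt = j^{−2s} Γ(s + 1/2) / (√π · s). -/
open MeasureTheory Real Set

lemma meas_cpow (w : ℂ) : Measurable fun t : ℝ => (t:ℂ) ^ w := by
  have h : (fun t : ℝ => (t:ℂ) ^ w) =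
      fun t : ℝ => if (t:ℂ) = 0 then (if w = 0 then 1 else 0)
        else Complex.exp (Complex.log t * w) := by
    funext t; rw [Complex.cpow_def]
  rw [h]
  refine Measurable.ite ?_ measurable_const
    ((Complex.measurable_log.comp Complex.measurable_ofReal).mul_const w).cexp
  have : {t : ℝ | (t:ℂ) = 0} = {(0:ℝ)} := by ext t; simp
  exact this ▸ measurableSet_singleton 0

lemma int_prod {c : ℂ} {j : ℝ} (hj : 0 < j) (w : ℝ → ℝ) (hw_meas : Measurable w)
    (hw_nonneg : ∀ l, 0 ≤ w l)
    (hint : ∀ t : ℝ, 0 < t → Integrable fun l : ℝ => Real.exp (-(t * l^2)) * w l)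
    (B : ℝ → ℝ)
    (hB : IntegrableOn (fun t : ℝ => t ^ c.re * (Real.exp (-(j^2 * t)) * B t)) (Ioi 0))
    (hle : ∀ t : ℝ, 0 < t → (∫ l : ℝ, Real.exp (-(t * l^2)) * w l) ≤ B t) :
    Integrable (Function.uncurry fun (t l : ℝ) =>
      (t:ℂ)^c * (Real.exp (-(t * (l^2+j^2))) : ℂ) * (w l : ℂ))
      ((volume.restrict (Ioi 0)).prod volume) := by
  have hmeas : AEStronglyMeasurable (Function.uncurry fun (t l : ℝ) =>
      (t:ℂ)^c * (Real.exp (-(t * (l^2+j^2))) : ℂ) * (w l : ℂ))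
      ((volume.restrict (Ioi 0)).prod volume) := by
    refine Measurable.aestronglyMeasurable ?_
    apply Measurable.mul
    apply Measurable.mul
    · exact (meas_cpow c).comp measurable_fst
    · exact Complex.measurable_ofReal.comp
        ((measurable_fst.mul (((measurable_snd.pow_const 2).add_const (j^2)))).neg.exp)
    · exact Complex.measurable_ofReal.comp (hw_meas.comp measurable_snd)
  rw [integrable_prod_iff hmeas]
  have hnorm : ∀ t : ℝ, 0 < t → ∀ l : ℝ,
      ‖(t:ℂ)^c * (Real.exp (-(t * (l^2+j^2))) : ℂ) * (w l : ℂ)‖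
        = t ^ c.re * (Real.exp (-(j^2 * t)) * (Real.exp (-(t * l^2)) * w l)) := by
    intro t ht l
    rw [norm_mul, norm_mul, Complex.norm_cpow_eq_rpow_re_of_pos ht,
      Complex.norm_real, Complex.norm_real, Real.norm_eq_abs, Real.norm_eq_abs,
      abs_of_pos (Real.exp_pos _), abs_of_nonneg (hw_nonneg l),
      show -(t*(l^2+j^2)) = -(j^2*t) + -(t*l^2) by ring, Real.exp_add]
    ring
  constructor
  · rw [ae_restrict_iff' measurableSet_Ioi]
    filter_upwards with t
    intro ht
    have : (fun l : ℝ => (t:ℂ)^c * (Real.exp (-(t * (l^2+j^2))) : ℂ) * (w l : ℂ))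
        = fun l : ℝ => ((t:ℂ)^c * (Real.exp (-(j^2 * t)) : ℂ)) *
          ((Real.exp (-(t * l^2)) * w l : ℝ) : ℂ) := by
      funext l
      rw [show -(t*(l^2+j^2)) = -(j^2*t) + -(t*l^2) by ring, Real.exp_add]
      push_cast
      ring
    simp only [Function.uncurry]
    rw [this]
    exact ((hint t ht).ofReal.const_mul _)
  · refine (hB.mono' ?_ ?_)
    · refine AEStronglyMeasurable.integral_prod_right' (f := fun p : ℝ × ℝ => ‖_‖) hmeas.norm
    · rw [ae_restrict_iff' measurableSet_Ioi]
      filter_upwards with t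
      intro ht
      simp only [Function.uncurry]
      have h1 : (∫ l : ℝ, ‖(t:ℂ)^c * (Real.exp (-(t * (l^2+j^2))) : ℂ) * (w l : ℂ)‖)
          = t ^ c.re * (Real.exp (-(j^2 * t)) * ∫ l : ℝ, Real.exp (-(t * l^2)) * w l) := by
        rw [← integral_const_mul, ← integral_const_mul]
        exact integral_congr_ae (Filter.Eventually.of_forall fun l => by
          simp only []
          rw [hnorm t ht l])
      rw [Real.norm_eq_abs]
      have h0 : 0 ≤ ∫ l : ℝ, ‖(t:ℂ)^c * (Real.exp (-(t * (l^2+j^2))) : ℂ) * (w l : ℂ)‖ :=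
        integral_nonneg fun l => norm_nonneg _
      rw [abs_of_nonneg h0, h1]
      have := hle t ht
      have ht0 : (0:ℝ) < t := ht
      have h2 : (0:ℝ) ≤ t ^ c.re * Real.exp (-(j^2 * t)) :=
        mul_nonneg (Real.rpow_nonneg ht0.le _) (Real.exp_pos _).le
      calc t ^ c.re * (Real.exp (-(j^2 * t)) * ∫ l : ℝ, Real.exp (-(t * l^2)) * w l)
          ≤ t ^ c.re * (Real.exp (-(j^2 * t)) * B t) := by
            rw [← mul_assoc, ← mul_assoc]
            exact mul_le_mul_of_nonneg_left this h2
        _ = t ^ c.re * (Real.exp (-(j^2 * t)) * B t) := rfl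
lemma key_int {c : ℂ} (hc : 0 < c.re) {r : ℝ} (hr : 0 < r) :
    ∫ t in Ioi (0:ℝ), (t:ℂ)^(c-1) * (Real.exp (-(t * r)) : ℂ)
      = (1/(r:ℂ))^c * Complex.Gamma c := by
  rw [← Complex.integral_cpow_mul_exp_neg_mul_Ioi hc hr]
  refine setIntegral_congr_fun measurableSet_Ioi fun t _ => ?_
  push_cast [Complex.ofReal_exp]
  ring_nf

lemma integrable_inv_sq_add {j : ℝ} (hj : 0 < j) :
    Integrable fun l : ℝ => (l^2+j^2)⁻¹ := by
  have h1 : Integrable fun x : ℝ => (1 + x^2)⁻¹ := integrable_inv_one_add_sq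
  have h2 := (h1.comp_div hj.ne').const_mul (j^2)⁻¹
  refine h2.congr (Filter.Eventually.of_forall fun x => ?_)
  field_simp
  ring

/-- From the proof of Lemma `Ratcontr`: for `j > 0` and `Re s > 0`,
`(j/π) ∫₀^∞ t^{s-1} e^{-tj²} (∫_ℝ e^{-tλ²}/(λ²+j²) dλ) dt = j^{-2s} Γ(s+1/2)/(√π s)`. -/
theorem stmt7 (j : ℝ) (hj : 0 < j) (s : ℂ) (hs : 0 < s.re) :
    ((j / Real.pi : ℝ) : ℂ) *
      (∫ t in Set.Ioi (0:ℝ), (t : ℂ) ^ (s - 1) * (Real.exp (-t * j ^ 2) : ℂ) *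
        ((∫ l : ℝ, Real.exp (-t * l ^ 2) / (l ^ 2 + j ^ 2)) : ℂ)) =
      (j : ℂ) ^ (-2 * s) * Complex.Gamma (s + 1/2) / ((Real.sqrt Real.pi : ℂ) * s) := by
  have hj2 : (0:ℝ) < j ^ 2 := by positivity
  have ha : ∀ l : ℝ, (0:ℝ) < l ^ 2 + j ^ 2 := fun l => by positivity
  set F : ℝ → ℝ → ℂ := fun t l =>
    (t:ℂ) ^ (s-1) * (Real.exp (-(t * (l^2+j^2))) : ℂ) * (((l^2+j^2)⁻¹ : ℝ) : ℂ) with hF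
  -- step 1 : rewrite integrand
  have hstep1 : ∀ t ∈ Ioi (0:ℝ),
      (t : ℂ) ^ (s - 1) * (Real.exp (-t * j ^ 2) : ℂ) *
        ((∫ l : ℝ, Real.exp (-t * l ^ 2) / (l ^ 2 + j ^ 2)) : ℂ)
      = ∫ l : ℝ, F t l := by
    intro t ht
    rw [← integral_const_mul]
    refine integral_congr_ae (Filter.Eventually.of_forall fun l => ?_)
    simp only [hF]
    rw [show -(t * (l^2+j^2)) = -t*j^2 + -t*l^2 by ring, Real.exp_add]
    push_cast
    ring
  -- Fubini 1
  have hw1 : Measurable fun l : ℝ => (l^2+j^2)⁻¹ :=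
    ((measurable_id.pow_const 2).add_const _).inv
  have hint1 : ∀ t : ℝ, 0 < t →
      Integrable fun l : ℝ => Real.exp (-(t * l^2)) * (l^2+j^2)⁻¹ := by
    intro t ht
    refine (integrable_inv_sq_add hj).mono'
      (((measurable_id.pow_const 2).const_mul t).neg.exp.mul hw1).aestronglyMeasurable
      (Filter.Eventually.of_forall fun l => ?_)
    rw [Real.norm_eq_abs, abs_of_nonneg (by positivity)]
    calc Real.exp (-(t * l^2)) * (l^2+j^2)⁻¹ ≤ 1 * (l^2+j^2)⁻¹ := by
          refine mul_le_mul_of_nonneg_right ?_ (by positivity)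
          exact Real.exp_le_one_iff.mpr (by nlinarith [sq_nonneg l])
      _ = (l^2+j^2)⁻¹ := one_mul _
  have hfub1 : Integrable (Function.uncurry F) ((volume.restrict (Ioi 0)).prod volume) := by
    have := int_prod (c := s - 1) hj (fun l => (l^2+j^2)⁻¹) hw1
      (fun l => by positivity) hint1 (fun _ => ∫ l : ℝ, (l^2+j^2)⁻¹)
      ?_ ?_
    · exact this
    · have h0 : IntegrableOn (fun t : ℝ => t ^ ((s:ℂ)-1).re * Real.exp (-(j^2) * t ^ (1:ℝ)))
          (Ioi 0) := integrableOn_rpow_mul_exp_neg_mul_rpow (by simpa using hs) zero_lt_one hj2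
      have h1 := h0.const_mul (∫ l : ℝ, (l^2+j^2)⁻¹)
      refine IntegrableOn.congr_fun h1 (fun t ht => ?_) measurableSet_Ioi
      rw [Real.rpow_one, neg_mul]
      ring
    · intro t ht
      refine integral_mono (hint1 t ht) (integrable_inv_sq_add hj) fun l => ?_
      calc Real.exp (-(t * l^2)) * (l^2+j^2)⁻¹ ≤ 1 * (l^2+j^2)⁻¹ := by
            refine mul_le_mul_of_nonneg_right ?_ (by positivity)
            exact Real.exp_le_one_iff.mpr (by nlinarith [sq_nonneg l])
        _ = (l^2+j^2)⁻¹ := one_mul _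
  -- step 3 : inner t integral
  have hstep3 : ∀ l : ℝ, (∫ t in Ioi (0:ℝ), F t l)
      = Complex.Gamma s * (1/(((l^2+j^2 : ℝ)):ℂ)) ^ (s+1) := by
    intro l
    have hne : (1/(((l^2+j^2 : ℝ)):ℂ)) ≠ 0 := by
      simp only [one_div, ne_eq, inv_eq_zero, Complex.ofReal_eq_zero]
      exact (ha l).ne'
    calc (∫ t in Ioi (0:ℝ), F t l)
        = (∫ t in Ioi (0:ℝ), (t:ℂ) ^ (s-1) * (Real.exp (-(t * (l^2+j^2))) : ℂ))
            * (((l^2+j^2)⁻¹ : ℝ) : ℂ) := by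
          rw [← integral_mul_const]
      _ = (1/(((l^2+j^2 : ℝ)):ℂ)) ^ s * Complex.Gamma s * (((l^2+j^2)⁻¹ : ℝ) : ℂ) := by
          rw [key_int hs (ha l)]
      _ = Complex.Gamma s * (1/(((l^2+j^2 : ℝ)):ℂ)) ^ (s+1) := by
          rw [Complex.cpow_add _ _ hne, Complex.cpow_one]
          push_cast
          ring
  -- Fubini 2 setup
  have hs0 : s ≠ 0 := fun h => by simp [h] at hs
  have hs1 : 0 < (s+1).re := by
    rw [Complex.add_re, Complex.one_re]; linarith
  have hsh : 0 < (s+1/2).re := by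
    have : (s+1/2).re = s.re + 1/2 := by
      rw [Complex.add_re]; norm_num
    rw [this]; linarith
  set G : ℝ → ℝ → ℂ := fun u l =>
    (u:ℂ) ^ s * (Real.exp (-(u * (l^2+j^2))) : ℂ) * (((1:ℝ)) : ℂ) with hG
  have hΓ1 : Complex.Gamma (s+1) ≠ 0 := Complex.Gamma_ne_zero_of_re_pos hs1
  have hstep4 : ∀ l : ℝ, (1/(((l^2+j^2 : ℝ)):ℂ)) ^ (s+1)
      = (Complex.Gamma (s+1))⁻¹ * ∫ u in Ioi (0:ℝ), G u l := by
    intro l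
    have hkey : (∫ u in Ioi (0:ℝ), G u l)
        = (1/(((l^2+j^2 : ℝ)):ℂ)) ^ (s+1) * Complex.Gamma (s+1) := by
      rw [← key_int hs1 (ha l)]
      refine setIntegral_congr_fun measurableSet_Ioi fun u _ => ?_
      simp only [hG, Complex.ofReal_one, mul_one, add_sub_cancel_right]
    rw [hkey]
    field_simp
  have hint2 : ∀ u : ℝ, 0 < u →
      Integrable fun l : ℝ => Real.exp (-(u * l^2)) * (1:ℝ) := by
    intro u hu
    simpa [mul_one, neg_mul] using integrable_exp_neg_mul_sq hu
  have hgauss : ∀ u : ℝ, 0 < u →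
      (∫ l : ℝ, Real.exp (-(u * l^2)) * (1:ℝ))
        = Real.sqrt Real.pi * u ^ (-(1/2) : ℝ) := by
    intro u hu
    have h1 : (∫ l : ℝ, Real.exp (-(u * l^2)) * (1:ℝ))
        = ∫ l : ℝ, Real.exp (-u * l^2) := by
      refine integral_congr_ae (Filter.Eventually.of_forall fun l => ?_)
      simp only [mul_one, neg_mul]
    rw [h1, integral_gaussian, div_eq_mul_inv, Real.sqrt_mul Real.pi_pos.le,
      Real.sqrt_inv, show (Real.sqrt u)⁻¹ = u ^ (-(1/2):ℝ) by
        rw [Real.sqrt_eq_rpow, ← Real.rpow_neg hu.le]]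
  have hfub2 : Integrable (Function.uncurry G) ((volume.restrict (Ioi 0)).prod volume) := by
    refine int_prod (c := s) hj (fun _ => (1:ℝ)) measurable_const (fun _ => zero_le_one)
      hint2 (fun u => Real.sqrt Real.pi * u ^ (-(1/2) : ℝ)) ?_ ?_
    · have h0 : IntegrableOn (fun u : ℝ => u ^ (s.re - 1/2) * Real.exp (-(j^2) * u^(1:ℝ)))
          (Ioi 0) := integrableOn_rpow_mul_exp_neg_mul_rpow (by linarith) zero_lt_one hj2
      have h1 := h0.const_mul (Real.sqrt Real.pi)
      refine IntegrableOn.congr_fun h1 (fun u hu => ?_) measurableSet_Ioi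
      have hu0 : (0:ℝ) < u := hu
      rw [Real.rpow_one, neg_mul, show s.re - 1/2 = s.re + -(1/2) by ring,
        Real.rpow_add hu0]
      ring
    · intro u hu
      rw [hgauss u hu]
  have hswap2 : (∫ l : ℝ, ∫ u in Ioi (0:ℝ), G u l)
      = ∫ u in Ioi (0:ℝ), ∫ l : ℝ, G u l := (integral_integral_swap hfub2).symm
  have hstep5 : ∀ u ∈ Ioi (0:ℝ), (∫ l : ℝ, G u l)
      = Real.sqrt Real.pi *
        ((u:ℂ) ^ (s + 1/2 - 1) * (Real.exp (-(u * j^2)) : ℂ)) := by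
    intro u hu
    have hu0 : (0:ℝ) < u := hu
    have hcu : ((u:ℝ):ℂ) ≠ 0 := Complex.ofReal_ne_zero.mpr hu0.ne'
    have h1 : (∫ l : ℝ, G u l)
        = ((u:ℂ) ^ s * (Real.exp (-(u * j^2)) : ℂ)) *
            ((∫ l : ℝ, Real.exp (-(u * l^2)) * (1:ℝ) : ℝ) : ℂ) := by
      have h2 : ((∫ l : ℝ, Real.exp (-(u*l^2)) * (1:ℝ) : ℝ) : ℂ)
          = ∫ l : ℝ, ((Real.exp (-(u*l^2)) * (1:ℝ) : ℝ) : ℂ) := integral_ofReal.symm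
      rw [h2, ← integral_const_mul]
      refine integral_congr_ae (Filter.Eventually.of_forall fun l => ?_)
      simp only [hG]
      rw [show -(u * (l^2+j^2)) = -(u*j^2) + -(u*l^2) by ring, Real.exp_add]
      push_cast
      ring
    rw [h1, hgauss u hu0]
    rw [Complex.ofReal_mul, Complex.ofReal_cpow hu0.le]
    rw [show (((-(1/2):ℝ)):ℂ) = -(1/2:ℂ) by norm_num]
    rw [show s + 1/2 - 1 = s + -(1/2:ℂ) by ring, Complex.cpow_add _ _ hcu]
    ring
  have hstep6 : (∫ u in Ioi (0:ℝ), ∫ l : ℝ, G u l)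
      = (Real.sqrt Real.pi : ℂ) *
          ((1/((j^2:ℝ):ℂ)) ^ (s+1/2) * Complex.Gamma (s+1/2)) := by
    rw [setIntegral_congr_fun measurableSet_Ioi hstep5, integral_const_mul,
      key_int hsh hj2]
  -- cpow identity
  have hj0 : (j:ℂ) ≠ 0 := Complex.ofReal_ne_zero.mpr hj.ne'
  have hjj : (1/((j^2:ℝ):ℂ)) ^ (s+1/2) = (j:ℂ) ^ (-2*s) * (j:ℂ)⁻¹ := by
    have hargne : ((j^2:ℝ):ℂ).arg ≠ Real.pi := by
      rw [Complex.arg_ofReal_of_nonneg (sq_nonneg j)]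
      exact Real.pi_ne_zero.symm
    have hargj : Complex.arg (j:ℂ) = 0 := Complex.arg_ofReal_of_nonneg hj.le
    have h2 : ((j:ℂ) ^ (2:ℕ)) = ((j^2:ℝ):ℂ) := by push_cast; ring
    rw [one_div, Complex.inv_cpow _ _ hargne, ← Complex.cpow_neg, ← h2,
      ← Complex.cpow_nat_mul' (by rw [hargj]; push_cast; simpa using Real.pi_pos)
        (by rw [hargj]; push_cast; simp [Real.pi_pos.le]),
      show ((2:ℕ):ℂ) * -(s+1/2) = -2*s + (-1) by push_cast; ring,
      Complex.cpow_add _ _ hj0, Complex.cpow_neg_one]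
  -- assemble
  have hswap1 : (∫ t in Ioi (0:ℝ), ∫ l : ℝ, F t l)
      = ∫ l : ℝ, ∫ t in Ioi (0:ℝ), F t l := integral_integral_swap hfub1
  rw [setIntegral_congr_fun measurableSet_Ioi hstep1, hswap1]
  have hK : (∫ l : ℝ, ∫ t in Ioi (0:ℝ), F t l)
      = Complex.Gamma s * ((Complex.Gamma (s+1))⁻¹ *
          ((Real.sqrt Real.pi : ℂ) *
            ((1/((j^2:ℝ):ℂ)) ^ (s+1/2) * Complex.Gamma (s+1/2)))) := by
    have : (∫ l : ℝ, ∫ t in Ioi (0:ℝ), F t l)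
        = ∫ l : ℝ, Complex.Gamma s * ((Complex.Gamma (s+1))⁻¹ * ∫ u in Ioi (0:ℝ), G u l) := by
      refine integral_congr_ae (Filter.Eventually.of_forall fun l => ?_)
      simp only []
      rw [hstep3 l, hstep4 l]
    rw [this]
    simp_rw [integral_const_mul]
    rw [hswap2, hstep6]
  rw [hK, hjj, Complex.Gamma_add_one s hs0]
  have hΓ : Complex.Gamma s ≠ 0 := Complex.Gamma_ne_zero_of_re_pos hs
  have hsqne : ((Real.sqrt Real.pi : ℝ):ℂ) ≠ 0 :=
    Complex.ofReal_ne_zero.mpr (Real.sqrt_pos.mpr Real.pi_pos).ne'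
  have hpi : ((Real.pi : ℝ):ℂ) = ((Real.sqrt Real.pi : ℝ):ℂ) * ((Real.sqrt Real.pi : ℝ):ℂ) := by
    rw [← Complex.ofReal_mul, Real.mul_self_sqrt Real.pi_pos.le]
  rw [Complex.ofReal_div, hpi]
  field_simp
end

section
/- For every c > 0 and j > 0 the iterated integral (j/π) ∫₀^∞ t^{−1} ( ∫_ℝ ( e^{−t(λ²+c²)} − e^{−t(λ²+j²)} )/(λ² + j²) dλ ) dt converges and equals −2 log(c + j) + 2 log(2j). -/
open MeasureTheory Real Set

lemma aux_integral_exp_Ioi (s : ℝ) (hs : 0 < s) :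
    (∫ t in Ioi (0:ℝ), exp (-(s * t))) = s⁻¹ := by
  have := integral_comp_mul_left_Ioi (fun x : ℝ => exp (-x)) 0 hs
  simp only [mul_zero] at this
  rw [this, integral_exp_neg_Ioi, neg_zero, exp_zero, smul_eq_mul, mul_one]

lemma frullani_le (A B : ℝ) (hA : 0 < A) (hAB : A ≤ B) :
    IntegrableOn (fun t : ℝ => t⁻¹ * (exp (-(A * t)) - exp (-(B * t)))) (Ioi 0) ∧
    (∫ t in Ioi (0:ℝ), t⁻¹ * (exp (-(A * t)) - exp (-(B * t)))) = log B - log A := by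
  have hB : 0 < B := lt_of_lt_of_le hA hAB
  set μ := volume.restrict (Ioi (0:ℝ)) with hμ
  set ν := volume.restrict (Ioc A B) with hν
  set F : ℝ → ℝ → ℝ := fun t s => exp (-(s * t)) with hF
  -- key pointwise identity
  have key : ∀ t : ℝ, t ∈ Ioi (0:ℝ) →
      t⁻¹ * (exp (-(A * t)) - exp (-(B * t))) = ∫ s in Ioc A B, exp (-(s * t)) := by
    intro t ht
    have ht' : (0:ℝ) < t := ht
    rw [← intervalIntegral.integral_of_le hAB]
    have h2 : ∀ s : ℝ, exp (-(s * t)) = exp ((-t) * s) := by intro s; ring_nf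
    simp_rw [h2]
    rw [intervalIntegral.integral_comp_mul_left (fun x => exp x) (by linarith : (-t) ≠ 0),
      integral_exp, smul_eq_mul]
    field_simp
    ring
  -- integrability of F on the product
  have hmeas : MeasurableSet (Ioi (0:ℝ) ×ˢ Ioc A B) :=
    measurableSet_Ioi.prod measurableSet_Ioc
  have hprod : μ.prod ν = (volume.prod volume).restrict (Ioi (0:ℝ) ×ˢ Ioc A B) :=
    Measure.prod_restrict _ _
  have hb1 : Integrable (fun t : ℝ => exp (-(A * t))) μ := by
    simpa only [neg_mul, IntegrableOn] using exp_neg_integrableOn_Ioi 0 hA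
  have hb2 : Integrable (fun _ : ℝ => (1:ℝ)) ν :=
    integrableOn_const measure_Ioc_lt_top.ne
  have hbound : Integrable (fun p : ℝ × ℝ => exp (-(A * p.1)) * 1) (μ.prod ν) :=
    Integrable.mul_prod hb1 hb2
  have hFcont : Continuous (Function.uncurry F) := by
    show Continuous fun p : ℝ × ℝ => exp (-(p.2 * p.1))
    fun_prop
  have hFi : Integrable (Function.uncurry F) (μ.prod ν) := by
    apply Integrable.mono' hbound (hFcont.aestronglyMeasurable)
    rw [hprod, ae_restrict_iff' hmeas]
    filter_upwards with p hp
    obtain ⟨hp1, hp2⟩ := hp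
    have h1 : (0:ℝ) < p.1 := hp1
    have h2 : A ≤ p.2 := hp2.1.le
    show ‖exp (-(p.2 * p.1))‖ ≤ _
    rw [mul_one, norm_eq_abs, abs_of_pos (exp_pos _)]
    exact exp_le_exp.2 (by nlinarith)
  constructor
  · apply (hFi.integral_prod_left).congr
    rw [Filter.EventuallyEq, hμ, ae_restrict_iff' measurableSet_Ioi]
    filter_upwards with t ht
    exact (key t ht).symm
  · have swap := integral_integral_swap hFi
    calc (∫ t in Ioi (0:ℝ), t⁻¹ * (exp (-(A * t)) - exp (-(B * t))))
        = ∫ t in Ioi (0:ℝ), ∫ s in Ioc A B, exp (-(s * t)) := by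
          apply setIntegral_congr_fun measurableSet_Ioi
          intro t ht; exact key t ht
      _ = ∫ s in Ioc A B, ∫ t in Ioi (0:ℝ), exp (-(s * t)) := swap
      _ = ∫ s in Ioc A B, s⁻¹ := by
          apply setIntegral_congr_fun measurableSet_Ioc
          intro s hs
          exact aux_integral_exp_Ioi s (lt_of_lt_of_le hA hs.1.le)
      _ = log B - log A := by
          rw [← intervalIntegral.integral_of_le hAB, integral_inv, log_div hB.ne' hA.ne']
          rw [uIcc_of_le hAB]
          rintro ⟨h0, _⟩; linarith

lemma frullani (A B : ℝ) (hA : 0 < A) (hB : 0 < B) :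
    IntegrableOn (fun t : ℝ => t⁻¹ * (exp (-(A * t)) - exp (-(B * t)))) (Ioi 0) ∧
    (∫ t in Ioi (0:ℝ), t⁻¹ * (exp (-(A * t)) - exp (-(B * t)))) = log B - log A := by
  rcases le_total A B with h | h
  · exact frullani_le A B hA h
  · obtain ⟨hi, hv⟩ := frullani_le B A hB h
    have hneg : (fun t : ℝ => t⁻¹ * (exp (-(A * t)) - exp (-(B * t)))) =
        fun t : ℝ => -(t⁻¹ * (exp (-(B * t)) - exp (-(A * t)))) := by
      funext t; ring
    constructor
    · rw [hneg]; exact hi.neg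
    · rw [hneg, integral_neg, hv]; ring

lemma aux_integrable_inv_sq_add_sq (a : ℝ) (ha : 0 < a) :
    Integrable (fun x : ℝ => (x ^ 2 + a ^ 2)⁻¹) := by
  have h : ∀ x : ℝ, (x ^ 2 + a ^ 2)⁻¹ = (a ^ 2)⁻¹ * (1 + (x / a) ^ 2)⁻¹ := by
    intro x; rw [← mul_inv]; congr 1; field_simp; ring
  simp_rw [h]
  exact ((integrable_inv_one_add_sq.comp_div (by positivity)).const_mul _)

lemma aux_integral_inv_sq_add_sq (a : ℝ) (ha : 0 < a) :
    (∫ x : ℝ, (x ^ 2 + a ^ 2)⁻¹) = π / a := by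
  have h : ∀ x : ℝ, (x ^ 2 + a ^ 2)⁻¹ = (a ^ 2)⁻¹ * (1 + (x / a) ^ 2)⁻¹ := by
    intro x; rw [← mul_inv]; congr 1; field_simp; ring
  simp_rw [h]
  rw [integral_const_mul, Measure.integral_comp_div (fun y : ℝ => (1 + y ^ 2)⁻¹) a,
    integral_univ_inv_one_add_sq]
  rw [abs_of_pos ha, smul_eq_mul]
  field_simp

lemma aux_integrable_prod_inv (a j : ℝ) (ha : 0 < a) (hj : 0 < j) :
    Integrable (fun l : ℝ => ((l ^ 2 + a ^ 2) * (l ^ 2 + j ^ 2))⁻¹) := by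
  apply Integrable.mono' ((aux_integrable_inv_sq_add_sq j hj).const_mul ((a ^ 2)⁻¹))
  · apply Continuous.aestronglyMeasurable
    exact (by fun_prop : Continuous fun l : ℝ => ((l ^ 2 + a ^ 2) * (l ^ 2 + j ^ 2))).inv₀
      (fun l => by positivity)
  · filter_upwards with l
    rw [norm_eq_abs, abs_of_pos (by positivity), mul_inv]
    gcongr
    nlinarith [sq_nonneg l]

lemma aux_integral_prod_inv (a j : ℝ) (ha : 0 < a) (hj : 0 < j) (hne : a ≠ j) :
    (∫ l : ℝ, ((l ^ 2 + a ^ 2) * (l ^ 2 + j ^ 2))⁻¹) = π / (a * j * (a + j)) := by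
  have hne2 : j ^ 2 - a ^ 2 ≠ 0 := by
    intro h
    apply hne
    nlinarith
  have key : ∀ l : ℝ, ((l ^ 2 + a ^ 2) * (l ^ 2 + j ^ 2))⁻¹ =
      (j ^ 2 - a ^ 2)⁻¹ * ((l ^ 2 + a ^ 2)⁻¹ - (l ^ 2 + j ^ 2)⁻¹) := by
    intro l
    have h1 : l ^ 2 + a ^ 2 ≠ 0 := by positivity
    have h2 : l ^ 2 + j ^ 2 ≠ 0 := by positivity
    field_simp
    ring
  simp_rw [key]
  rw [integral_const_mul,
    integral_sub (aux_integrable_inv_sq_add_sq a ha) (aux_integrable_inv_sq_add_sq j hj),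
    aux_integral_inv_sq_add_sq a ha, aux_integral_inv_sq_add_sq j hj]
  field_simp
  ring

lemma aux_log_int_le (p q j : ℝ) (hp : 0 < p) (hpq : p ≤ q) (hj : 0 < j) :
    Integrable (fun l : ℝ => (log (l ^ 2 + q ^ 2) - log (l ^ 2 + p ^ 2)) * (l ^ 2 + j ^ 2)⁻¹) ∧
    (∫ l : ℝ, (log (l ^ 2 + q ^ 2) - log (l ^ 2 + p ^ 2)) * (l ^ 2 + j ^ 2)⁻¹) =
      2 * π / j * (log (q + j) - log (p + j)) := by
  have hq : 0 < q := lt_of_lt_of_le hp hpq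
  set ν := volume.restrict (Ioc p q) with hν
  set G : ℝ → ℝ → ℝ := fun l a => 2 * a * (l ^ 2 + a ^ 2)⁻¹ * (l ^ 2 + j ^ 2)⁻¹ with hG
  -- key pointwise identity via FTC
  have key : ∀ l : ℝ, (log (l ^ 2 + q ^ 2) - log (l ^ 2 + p ^ 2)) * (l ^ 2 + j ^ 2)⁻¹ =
      ∫ a in Ioc p q, G l a := by
    intro l
    have hderiv : ∀ a ∈ uIcc p q, HasDerivAt (fun a : ℝ => log (l ^ 2 + a ^ 2))
        (2 * a * (l ^ 2 + a ^ 2)⁻¹) a := by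
      intro a ha
      rw [uIcc_of_le hpq] at ha
      have hapos : 0 < a := lt_of_lt_of_le hp ha.1
      have hne : l ^ 2 + a ^ 2 ≠ 0 := by positivity
      have h1 : HasDerivAt (fun a : ℝ => l ^ 2 + a ^ 2) (2 * a) a := by
        simpa using (hasDerivAt_pow 2 a).const_add (l ^ 2)
      have := (Real.hasDerivAt_log hne).comp a h1
      refine this.congr_deriv ?_
      ring
    have hcont : IntervalIntegrable (fun a : ℝ => 2 * a * (l ^ 2 + a ^ 2)⁻¹) volume p q := by
      apply ContinuousOn.intervalIntegrable
      apply ContinuousOn.mul (by fun_prop)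
      apply ContinuousOn.inv₀ (by fun_prop)
      intro a ha
      rw [uIcc_of_le hpq] at ha
      have : 0 < a := lt_of_lt_of_le hp ha.1
      positivity
    have hFTC := intervalIntegral.integral_eq_sub_of_hasDerivAt hderiv hcont
    rw [intervalIntegral.integral_of_le hpq] at hFTC
    rw [← hFTC, ← integral_mul_const]
  -- integrability on the product
  have hbound : Integrable
      (fun z : ℝ × ℝ => (2 * q * (p ^ 2)⁻¹ * (z.1 ^ 2 + j ^ 2)⁻¹) * 1) (volume.prod ν) := by
    have h1 : Integrable (fun l : ℝ => 2 * q * (p ^ 2)⁻¹ * (l ^ 2 + j ^ 2)⁻¹) volume :=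
      (aux_integrable_inv_sq_add_sq j hj).const_mul _
    have h2 : Integrable (fun _ : ℝ => (1:ℝ)) ν :=
      integrableOn_const measure_Ioc_lt_top.ne
    exact h1.mul_prod h2
  have hGmeas : AEStronglyMeasurable (Function.uncurry G) (volume.prod ν) := by
    apply Measurable.aestronglyMeasurable
    show Measurable fun z : ℝ × ℝ => 2 * z.2 * (z.1 ^ 2 + z.2 ^ 2)⁻¹ * (z.1 ^ 2 + j ^ 2)⁻¹
    fun_prop
  have hGi : Integrable (Function.uncurry G) (volume.prod ν) := by
    apply Integrable.mono' hbound hGmeas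
    have : volume.prod ν = (volume.prod volume).restrict ((univ : Set ℝ) ×ˢ Ioc p q) := by
      rw [← Measure.prod_restrict, Measure.restrict_univ]
    rw [this, ae_restrict_iff' (MeasurableSet.univ.prod measurableSet_Ioc)]
    filter_upwards with z hz
    obtain ⟨ha1, ha2⟩ : p < z.2 ∧ z.2 ≤ q := hz.2
    have hap : 0 < z.2 := lt_of_lt_of_le hp ha1.le
    show |2 * z.2 * (z.1 ^ 2 + z.2 ^ 2)⁻¹ * (z.1 ^ 2 + j ^ 2)⁻¹| ≤ _
    rw [abs_of_nonneg (by positivity), mul_one]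
    gcongr
    all_goals nlinarith [sq_nonneg z.1]
  constructor
  · have heq : (fun l : ℝ => (log (l ^ 2 + q ^ 2) - log (l ^ 2 + p ^ 2)) * (l ^ 2 + j ^ 2)⁻¹)
        = fun l => ∫ a, G l a ∂ν := by
      funext l; exact key l
    rw [heq]
    exact hGi.integral_prod_left
  · have hswap := integral_integral_swap hGi
    have hj_ne : ∀ᵐ a : ℝ, a ≠ j := by
      filter_upwards [compl_mem_ae_iff.2 (measure_singleton j)] with a ha
      simpa using ha
    calc (∫ l : ℝ, (log (l ^ 2 + q ^ 2) - log (l ^ 2 + p ^ 2)) * (l ^ 2 + j ^ 2)⁻¹)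
        = ∫ l : ℝ, ∫ a, G l a ∂ν := by exact integral_congr_ae (Filter.Eventually.of_forall key)
      _ = ∫ a in Ioc p q, ∫ l : ℝ, G l a := hswap
      _ = ∫ a in Ioc p q, 2 * π / j * (a + j)⁻¹ := by
          apply integral_congr_ae
          rw [Filter.EventuallyEq, ae_restrict_iff' measurableSet_Ioc]
          filter_upwards [hj_ne] with a hane ha
          have hapos : 0 < a := lt_of_lt_of_le hp ha.1.le
          have : ∀ l : ℝ, G l a = 2 * a * ((l ^ 2 + a ^ 2) * (l ^ 2 + j ^ 2))⁻¹ := by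
            intro l; rw [hG]; rw [mul_inv]; ring
          simp_rw [this]
          rw [integral_const_mul, aux_integral_prod_inv a j hapos hj hane]
          have h1 : a + j ≠ 0 := by positivity
          field_simp
      _ = 2 * π / j * (log (q + j) - log (p + j)) := by
          rw [integral_const_mul, ← intervalIntegral.integral_of_le hpq]
          congr 1
          rw [intervalIntegral.integral_comp_add_right (fun x : ℝ => x⁻¹) j, integral_inv,
            log_div (by positivity) (by positivity)]
          rw [uIcc_of_le (by linarith)]
          rintro ⟨h0, _⟩; linarith

lemma aux_log_int (c j : ℝ) (hc : 0 < c) (hj : 0 < j) :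
    Integrable (fun l : ℝ => (log (l ^ 2 + j ^ 2) - log (l ^ 2 + c ^ 2)) * (l ^ 2 + j ^ 2)⁻¹) ∧
    (∫ l : ℝ, (log (l ^ 2 + j ^ 2) - log (l ^ 2 + c ^ 2)) * (l ^ 2 + j ^ 2)⁻¹) =
      2 * π / j * (log (2 * j) - log (c + j)) := by
  rcases le_total c j with h | h
  · have := aux_log_int_le c j j hc h hj
    rwa [show j + j = 2 * j by ring] at this
  · obtain ⟨hi, hv⟩ := aux_log_int_le j c j hj h hj
    have hneg : (fun l : ℝ => (log (l ^ 2 + j ^ 2) - log (l ^ 2 + c ^ 2)) * (l ^ 2 + j ^ 2)⁻¹) =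
        fun l : ℝ => -((log (l ^ 2 + c ^ 2) - log (l ^ 2 + j ^ 2)) * (l ^ 2 + j ^ 2)⁻¹) := by
      funext l; ring
    constructor
    · rw [hneg]; exact hi.neg
    · rw [hneg, integral_neg, hv, show j + j = 2 * j by ring]; ring

lemma aux_exp_diff (x y : ℝ) : |exp (-x) - exp (-y)| ≤ |x - y| * exp (-(min x y)) := by
  have key : ∀ u v : ℝ, u ≤ v → |exp (-u) - exp (-v)| ≤ |u - v| * exp (-(min u v)) := by
    intro u v huv
    rw [min_eq_left huv, abs_of_nonpos (by linarith : u - v ≤ 0),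
      abs_of_nonneg (sub_nonneg.2 (exp_le_exp.2 (by linarith : -v ≤ -u)))]
    have h1 : exp (-v) = exp (-u) * exp (-(v - u)) := by
      rw [← exp_add]; ring_nf
    rw [h1]
    have h2 : 1 - exp (-(v - u)) ≤ v - u := by
      have := add_one_le_exp (-(v - u))
      linarith
    calc exp (-u) - exp (-u) * exp (-(v - u)) = exp (-u) * (1 - exp (-(v - u))) := by ring
      _ ≤ exp (-u) * (v - u) := by
          apply mul_le_mul_of_nonneg_left h2 (exp_pos _).le
      _ = -(u - v) * exp (-u) := by ring
  rcases le_total x y with h | h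
  · exact key x y h
  · have := key y x h
    rwa [abs_sub_comm, abs_sub_comm y x, min_comm] at this

/-- From the proof of Lemma `Ratcontr`: for `c, j > 0`,
`(j/π) ∫₀^∞ t⁻¹ ∫_ℝ (e^{-t(λ²+c²)} - e^{-t(λ²+j²)})/(λ²+j²) dλ dt = -2 log(c+j) + 2 log(2j)`. -/
theorem stmt8 (c j : ℝ) (hc : 0 < c) (hj : 0 < j) :
    MeasureTheory.IntegrableOn
      (fun t : ℝ => t⁻¹ * ∫ l : ℝ,
        (Real.exp (-t * (l ^ 2 + c ^ 2)) - Real.exp (-t * (l ^ 2 + j ^ 2))) / (l ^ 2 + j ^ 2))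
      (Set.Ioi 0) ∧
    (j / Real.pi) * (∫ t in Set.Ioi (0:ℝ), t⁻¹ * ∫ l : ℝ,
        (Real.exp (-t * (l ^ 2 + c ^ 2)) - Real.exp (-t * (l ^ 2 + j ^ 2))) / (l ^ 2 + j ^ 2)) =
      -2 * Real.log (c + j) + 2 * Real.log (2 * j) := by
  set μ := volume.restrict (Ioi (0:ℝ)) with hμ
  set H : ℝ → ℝ → ℝ := fun t l =>
    t⁻¹ * ((exp (-t * (l ^ 2 + c ^ 2)) - exp (-t * (l ^ 2 + j ^ 2))) / (l ^ 2 + j ^ 2)) with hH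
  set m : ℝ := min c j with hm
  have hm0 : 0 < m := lt_min hc hj
  -- the bound
  have hbound : Integrable
      (fun z : ℝ × ℝ => (|c ^ 2 - j ^ 2| * exp (-(m ^ 2 * z.1))) * (z.2 ^ 2 + j ^ 2)⁻¹)
      (μ.prod volume) := by
    have h1 : Integrable (fun t : ℝ => |c ^ 2 - j ^ 2| * exp (-(m ^ 2 * t))) μ := by
      apply Integrable.const_mul
      simpa only [neg_mul, IntegrableOn] using exp_neg_integrableOn_Ioi 0 (by positivity : (0:ℝ) < m ^ 2)
    exact h1.mul_prod (aux_integrable_inv_sq_add_sq j hj)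
  have hHmeas : AEStronglyMeasurable (Function.uncurry H) (μ.prod volume) := by
    apply Measurable.aestronglyMeasurable
    show Measurable fun z : ℝ × ℝ =>
      z.1⁻¹ * ((exp (-z.1 * (z.2 ^ 2 + c ^ 2)) - exp (-z.1 * (z.2 ^ 2 + j ^ 2))) / (z.2 ^ 2 + j ^ 2))
    fun_prop
  have hprod : μ.prod volume = (volume.prod volume).restrict (Ioi (0:ℝ) ×ˢ (univ : Set ℝ)) := by
    rw [← Measure.prod_restrict]
    congr 1
    exact Measure.restrict_univ.symm
  have hHi : Integrable (Function.uncurry H) (μ.prod volume) := by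
    apply Integrable.mono' hbound hHmeas
    rw [hprod, ae_restrict_iff' (measurableSet_Ioi.prod (MeasurableSet.univ : MeasurableSet (univ : Set ℝ)))]
    filter_upwards with z hz
    have ht : (0:ℝ) < z.1 := hz.1
    set t := z.1
    set l := z.2
    show ‖t⁻¹ * ((exp (-t * (l ^ 2 + c ^ 2)) - exp (-t * (l ^ 2 + j ^ 2))) / (l ^ 2 + j ^ 2))‖ ≤ _
    have hd := aux_exp_diff (t * (l ^ 2 + c ^ 2)) (t * (l ^ 2 + j ^ 2))
    have hmin : m ^ 2 * t ≤ min (t * (l ^ 2 + c ^ 2)) (t * (l ^ 2 + j ^ 2)) := by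
      apply le_min
      · have : m ^ 2 ≤ l ^ 2 + c ^ 2 := by
          have := min_le_left c j
          nlinarith [sq_nonneg l]
        nlinarith
      · have : m ^ 2 ≤ l ^ 2 + j ^ 2 := by
          have := min_le_right c j
          nlinarith [sq_nonneg l]
        nlinarith
    have habs : |t * (l ^ 2 + c ^ 2) - t * (l ^ 2 + j ^ 2)| = t * |c ^ 2 - j ^ 2| := by
      rw [show t * (l ^ 2 + c ^ 2) - t * (l ^ 2 + j ^ 2) = t * (c ^ 2 - j ^ 2) by ring,
        abs_mul, abs_of_pos ht]
    have hexp : exp (-min (t * (l ^ 2 + c ^ 2)) (t * (l ^ 2 + j ^ 2))) ≤ exp (-(m ^ 2 * t)) :=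
      exp_le_exp.2 (by linarith)
    have hd2 : |exp (-t * (l ^ 2 + c ^ 2)) - exp (-t * (l ^ 2 + j ^ 2))| ≤
        t * |c ^ 2 - j ^ 2| * exp (-(m ^ 2 * t)) := by
      rw [neg_mul, neg_mul]
      calc |exp (-(t * (l ^ 2 + c ^ 2))) - exp (-(t * (l ^ 2 + j ^ 2)))|
          ≤ |t * (l ^ 2 + c ^ 2) - t * (l ^ 2 + j ^ 2)| *
            exp (-(min (t * (l ^ 2 + c ^ 2)) (t * (l ^ 2 + j ^ 2)))) := hd
        _ ≤ t * |c ^ 2 - j ^ 2| * exp (-(m ^ 2 * t)) := by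
            rw [habs]
            exact mul_le_mul_of_nonneg_left hexp (by positivity)
    rw [norm_eq_abs, abs_mul, abs_div, abs_of_pos (by positivity : (0:ℝ) < l ^ 2 + j ^ 2),
      abs_of_pos (by positivity : (0:ℝ) < t⁻¹), div_eq_mul_inv]
    calc t⁻¹ * (|exp (-t * (l ^ 2 + c ^ 2)) - exp (-t * (l ^ 2 + j ^ 2))| * (l ^ 2 + j ^ 2)⁻¹)
        ≤ t⁻¹ * ((t * |c ^ 2 - j ^ 2| * exp (-(m ^ 2 * t))) * (l ^ 2 + j ^ 2)⁻¹) := by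
          apply mul_le_mul_of_nonneg_left _ (by positivity)
          exact mul_le_mul_of_nonneg_right hd2 (by positivity)
      _ = (t⁻¹ * t) * (|c ^ 2 - j ^ 2| * exp (-(m ^ 2 * t)) * (l ^ 2 + j ^ 2)⁻¹) := by ring
      _ = |c ^ 2 - j ^ 2| * exp (-(m ^ 2 * t)) * (l ^ 2 + j ^ 2)⁻¹ := by
          rw [inv_mul_cancel₀ ht.ne', one_mul]
  -- pointwise: the target integrand equals ∫ l, H t l
  have hpt : ∀ t : ℝ, (t⁻¹ * ∫ l : ℝ,
      (exp (-t * (l ^ 2 + c ^ 2)) - exp (-t * (l ^ 2 + j ^ 2))) / (l ^ 2 + j ^ 2)) =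
      ∫ l : ℝ, H t l := by
    intro t
    rw [hH]
    exact (integral_const_mul _ _).symm
  constructor
  · have heq : (fun t : ℝ => t⁻¹ * ∫ l : ℝ,
        (exp (-t * (l ^ 2 + c ^ 2)) - exp (-t * (l ^ 2 + j ^ 2))) / (l ^ 2 + j ^ 2)) =
        fun t => ∫ l, H t l := funext hpt
    rw [IntegrableOn, heq]
    exact hHi.integral_prod_left
  · have hswap := integral_integral_swap hHi
    have hinner : ∀ l : ℝ, (∫ t in Ioi (0:ℝ), H t l) =
        (log (l ^ 2 + j ^ 2) - log (l ^ 2 + c ^ 2)) * (l ^ 2 + j ^ 2)⁻¹ := by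
      intro l
      have hA : (0:ℝ) < l ^ 2 + c ^ 2 := by positivity
      have hB : (0:ℝ) < l ^ 2 + j ^ 2 := by positivity
      have hfr := frullani (l ^ 2 + c ^ 2) (l ^ 2 + j ^ 2) hA hB
      have hrw : ∀ t : ℝ, H t l =
          (t⁻¹ * (exp (-((l ^ 2 + c ^ 2) * t)) - exp (-((l ^ 2 + j ^ 2) * t)))) *
            (l ^ 2 + j ^ 2)⁻¹ := by
        intro t
        simp only [hH]
        rw [show -t * (l ^ 2 + c ^ 2) = -((l ^ 2 + c ^ 2) * t) by ring,
          show -t * (l ^ 2 + j ^ 2) = -((l ^ 2 + j ^ 2) * t) by ring, div_eq_mul_inv]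
        ring
      simp_rw [hrw]
      rw [integral_mul_const, hfr.2]
    calc (j / π) * (∫ t in Ioi (0:ℝ), t⁻¹ * ∫ l : ℝ,
          (exp (-t * (l ^ 2 + c ^ 2)) - exp (-t * (l ^ 2 + j ^ 2))) / (l ^ 2 + j ^ 2))
        = (j / π) * (∫ t in Ioi (0:ℝ), ∫ l : ℝ, H t l) := by
          congr 1
          exact setIntegral_congr_fun measurableSet_Ioi (fun t _ => hpt t)
      _ = (j / π) * (∫ l : ℝ, ∫ t in Ioi (0:ℝ), H t l) := by rw [hswap]
      _ = (j / π) * (∫ l : ℝ, (log (l ^ 2 + j ^ 2) - log (l ^ 2 + c ^ 2)) * (l ^ 2 + j ^ 2)⁻¹) := by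
          congr 1
          exact integral_congr_ae (Filter.Eventually.of_forall hinner)
      _ = (j / π) * (2 * π / j * (log (2 * j) - log (c + j))) := by
          rw [(aux_log_int c j hc hj).2]
      _ = -2 * log (c + j) + 2 * log (2 * j) := by
          field_simp
          ring
end

section
/- Let c > 0, N ∈ ℕ, and let P(λ) = Σ_{k=0}^N a_k λ^{2k} be an even polynomial with complex coefficients. Then: (i) for every s ∈ ℂ with Re(s) > N + 1/2 the integral E(s) := ∫₀^∞ t^{s−1} e^{−tc²} ( ∫_ℝ e^{−tλ²} P(iλ) dλ ) dt converges and E(s) = Σ_{k=0}^N (−1)^k a_k Γ(k + 1/2) Γ(s − k − 1/2) c^{2k+1−2s}; (ii) the right-hand side is holomorphic at s = 0 and its value there satisfies Σ_{k=0}^N (−1)^k a_k Γ(k + 1/2) Γ(−k − 1/2) c^{2k+1} = −2π ∫₀^c P(λ) dλ. -/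
open MeasureTheory Real Set


lemma cpow_pos_eq {x : ℝ} (hx : 0 < x) (w : ℂ) :
    (x:ℂ) ^ w = Complex.exp (w * Real.log x) := by
  rw [Complex.cpow_def_of_ne_zero (by exact_mod_cast hx.ne'), Complex.ofReal_log hx.le, mul_comm]

lemma moment {b : ℝ} (hb : 0 < b) (k : ℕ) :
    ∫ x : ℝ, x ^ (2*k) * Real.exp (-b * x^2)
      = Real.Gamma ((k:ℝ) + 1/2) * b ^ (-((k:ℝ) + 1/2)) := by
  have h1 : ∀ x : ℝ, |x| ^ (2*k) * Real.exp (-b * |x|^2)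
      = x ^ (2*k) * Real.exp (-b * x^2) := by
    intro x; rw [pow_mul, pow_mul, sq_abs]
  have h2 := _root_.integral_comp_abs
    (f := fun x => x ^ (2*k) * Real.exp (-b * x^2))
  simp only [h1] at h2
  rw [h2]
  have h3 : ∀ x ∈ Ioi (0:ℝ), x ^ (2*k) * Real.exp (-b * x^2)
      = x ^ ((2*k : ℕ) : ℝ) * Real.exp (-b * x ^ (2:ℝ)) := by
    intro x hx
    rw [Real.rpow_natCast, Real.rpow_two]
  rw [setIntegral_congr_fun measurableSet_Ioi h3]
  rw [integral_rpow_mul_exp_neg_mul_rpow two_pos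
    (lt_of_lt_of_le (by norm_num) (Nat.cast_nonneg _)) hb]
  have hcast : ((2*k:ℕ):ℝ) = 2*(k:ℝ) := by push_cast; ring
  rw [hcast, show (-(2*(k:ℝ)+1)/2) = -((k:ℝ)+1/2) by ring,
    show ((2*(k:ℝ)+1)/2) = (k:ℝ)+1/2 by ring]
  ring


lemma gammaInt {a : ℂ} (ha : 0 < a.re) {r : ℝ} (hr : 0 < r) :
    IntegrableOn (fun t : ℝ => (t:ℂ) ^ (a - 1) * Real.exp (-(r * t))) (Ioi 0) := by
  have h := Complex.GammaIntegral_convergent ha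
  rw [← mul_zero r, ← integrableOn_Ioi_comp_mul_left_iff _ _ hr] at h
  -- h : IntegrableOn (fun x => (exp (-(r*x)) : ℂ) * (r*x:ℂ)^(a-1)) (Ioi 0)
  refine IntegrableOn.congr_fun (h.const_mul ((r:ℂ)^(a-1))⁻¹)
    (fun t (ht : 0 < t) => ?_) measurableSet_Ioi
  push_cast
  rw [Complex.mul_cpow_ofReal_nonneg hr.le ht.le]
  have hA : ((r:ℂ)^(a-1)) ≠ 0 := by
    rw [Ne, Complex.cpow_eq_zero_iff, not_and_or]
    exact Or.inl (Complex.ofReal_ne_zero.mpr hr.ne')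
  field_simp


lemma gammaProd (k : ℕ) :
    Real.Gamma ((k:ℝ) + 1/2) * Real.Gamma (-(k:ℝ) - 1/2)
      = (-1:ℝ)^(k+1) * (2*π) / (2*k+1) := by
  induction k with
  | zero =>
    have h1 : Real.Gamma (1/2) = √π := Real.Gamma_one_half_eq
    have h2 : Real.Gamma (-(1/2) + 1) = (-(1/2):ℝ) * Real.Gamma (-(1/2)) :=
      Real.Gamma_add_one (by norm_num)
    have h3 : (-(1/2):ℝ) + 1 = 1/2 := by norm_num
    rw [h3, h1] at h2
    have h4 : Real.Gamma (-(1/2):ℝ) = -2 * √π := by linarith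
    simp only [Nat.cast_zero]
    rw [show -(0:ℝ) - 1/2 = -(1/2) by ring, show (0:ℝ) + 1/2 = 1/2 by ring, h1, h4]
    rw [show √π * (-2 * √π) = -2 * (√π * √π) by ring, Real.mul_self_sqrt pi_pos.le]
    norm_num
  | succ k ih =>
    have ha : Real.Gamma (((k:ℝ)+1) + 1/2) = ((k:ℝ)+1/2) * Real.Gamma ((k:ℝ)+1/2) := by
      rw [show ((k:ℝ)+1) + 1/2 = ((k:ℝ)+1/2) + 1 by ring]
      exact Real.Gamma_add_one (by positivity)
    have hx : (-(k:ℝ)-3/2) ≠ 0 := by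
      have : (0:ℝ) ≤ k := Nat.cast_nonneg k
      intro h; nlinarith
    have hb : Real.Gamma (-(k:ℝ)-1/2) = (-(k:ℝ)-3/2) * Real.Gamma (-(k:ℝ)-3/2) := by
      rw [show (-(k:ℝ)-1/2) = (-(k:ℝ)-3/2) + 1 by ring]
      exact Real.Gamma_add_one hx
    have hgb : Real.Gamma (-(k:ℝ)-3/2) = Real.Gamma (-(k:ℝ)-1/2) / (-(k:ℝ)-3/2) := by
      rw [eq_div_iff hx, mul_comm]; exact hb.symm
    have hc : ((k+1:ℕ):ℝ) = (k:ℝ)+1 := by push_cast; ring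
    rw [hc, show -((k:ℝ)+1) - 1/2 = -(k:ℝ)-3/2 by ring, ha, hgb]
    have key : ((k:ℝ)+1/2) * Real.Gamma ((k:ℝ)+1/2) * (Real.Gamma (-(k:ℝ)-1/2) / (-(k:ℝ)-3/2))
        = ((k:ℝ)+1/2)/(-(k:ℝ)-3/2) * (Real.Gamma ((k:ℝ)+1/2) * Real.Gamma (-(k:ℝ)-1/2)) := by
      ring
    rw [key, ih, pow_succ]
    rw [div_mul_div_comm, div_eq_div_iff (by
      apply mul_ne_zero hx (by positivity)) (by positivity)]
    ring

lemma innerPtwise (b : ℝ) (A : ℂ) (k : ℕ) :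
    (fun l : ℝ => (Real.exp (-b * l^2) : ℂ) * (A * (Complex.I * l)^(2*k)))
      = fun l : ℝ => (A * (-1)^k) * ((l^(2*k) * Real.exp (-b * l^2) : ℝ) : ℂ) := by
  funext l
  have hI : (Complex.I * (l:ℂ))^(2*k) = (-1)^k * (l:ℂ)^(2*k) := by
    rw [mul_pow, pow_mul, Complex.I_sq]
  rw [hI]
  push_cast
  ring

lemma realint {b : ℝ} (hb : 0 < b) (k : ℕ) :
    Integrable (fun x : ℝ => x^(2*k) * Real.exp (-b * x^2)) := by
  have h := integrable_rpow_mul_exp_neg_mul_sq hb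
    (s := ((2*k:ℕ):ℝ)) (lt_of_lt_of_le (by norm_num) (Nat.cast_nonneg _))
  have e : (fun x:ℝ => x^(2*k) * Real.exp (-b * x^2))
      = fun x:ℝ => x ^ (((2*k:ℕ)):ℝ) * Real.exp (-b * x^2) := by
    funext x; rw [Real.rpow_natCast]
  rw [e]; exact h

lemma term_integrable {b : ℝ} (hb : 0 < b) (A : ℂ) (k : ℕ) :
    Integrable (fun l : ℝ => (Real.exp (-b * l^2) : ℂ) * (A * (Complex.I * l)^(2*k))) := by
  rw [innerPtwise]
  exact ((realint hb k).ofReal.const_mul _)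

lemma term_integral {b : ℝ} (hb : 0 < b) (A : ℂ) (k : ℕ) :
    (∫ l : ℝ, (Real.exp (-b * l^2) : ℂ) * (A * (Complex.I * l)^(2*k)))
      = A * (-1)^k * ((Real.Gamma ((k:ℝ) + 1/2) * b ^ (-((k:ℝ) + 1/2)) : ℝ) : ℂ) := by
  rw [innerPtwise, MeasureTheory.integral_const_mul]
  congr 1
  rw [← moment hb k]
  exact integral_ofReal

/-- Lemma `l2tor2` (after Fried), with explicit coefficients: for `c > 0` and the even
polynomial `P(z) = Σ_{k≤N} a_k z^{2k}`, the Mellin transform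
`E(s) = ∫₀^∞ t^{s-1} e^{-tc²} ∫_ℝ e^{-tλ²} P(iλ) dλ dt` converges for `Re s > N + 1/2` and
equals `Σ_k (-1)^k a_k Γ(k+1/2) Γ(s-k-1/2) c^{2k+1-2s}`; this expression is holomorphic at
`s = 0` and its value there is `-2π ∫₀^c P(λ) dλ`. -/
theorem stmt11 (c : ℝ) (hc : 0 < c) (N : ℕ) (a : ℕ → ℂ) :
    (∀ s : ℂ, (N : ℝ) + 1/2 < s.re →
      MeasureTheory.IntegrableOn
        (fun t : ℝ => (t : ℂ) ^ (s - 1) * (Real.exp (-t * c ^ 2) : ℂ) *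
          ∫ l : ℝ, (Real.exp (-t * l ^ 2) : ℂ) *
            ∑ k ∈ Finset.range (N+1), a k * (Complex.I * l) ^ (2*k)) (Set.Ioi 0) ∧
      (∫ t in Set.Ioi (0:ℝ), (t : ℂ) ^ (s - 1) * (Real.exp (-t * c ^ 2) : ℂ) *
          ∫ l : ℝ, (Real.exp (-t * l ^ 2) : ℂ) *
            ∑ k ∈ Finset.range (N+1), a k * (Complex.I * l) ^ (2*k)) =
        ∑ k ∈ Finset.range (N+1), (-1 : ℂ) ^ k * a k * (Real.Gamma ((k:ℝ) + 1/2) : ℂ) *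
          Complex.Gamma (s - k - 1/2) * (c : ℂ) ^ ((2*(k:ℂ)+1) - 2*s)) ∧
    DifferentiableAt ℂ (fun s : ℂ =>
      ∑ k ∈ Finset.range (N+1), (-1 : ℂ) ^ k * a k * (Real.Gamma ((k:ℝ) + 1/2) : ℂ) *
        Complex.Gamma (s - k - 1/2) * (c : ℂ) ^ ((2*(k:ℂ)+1) - 2*s)) 0 ∧
    (∑ k ∈ Finset.range (N+1), (-1 : ℂ) ^ k * a k * (Real.Gamma ((k:ℝ) + 1/2) : ℂ) *
        (Real.Gamma (-(k:ℝ) - 1/2) : ℂ) * (c : ℂ) ^ (2*k+1)) =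
      -2 * (Real.pi : ℂ) *
        ∫ l in (0:ℝ)..c, ∑ k ∈ Finset.range (N+1), a k * (l : ℂ) ^ (2*k) := by
  refine ⟨?_, ?_, ?_⟩
  · -- Part 1: convergence and evaluation of the Mellin transform
    intro s hs
    have hc2 : (0:ℝ) < c^2 := by positivity
    set coef : ℕ → ℂ := fun k => (-1:ℂ)^k * a k * (Real.Gamma ((k:ℝ) + 1/2) : ℂ) with hcoef
    set g : ℕ → ℝ → ℂ := fun k t => (t:ℂ) ^ ((s - k - 1/2) - 1) * Real.exp (-(c^2 * t)) with hg
    have hre : ∀ k ∈ Finset.range (N+1), 0 < (s - k - 1/2).re := by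
      intro k hk
      have hkN : (k:ℝ) ≤ N := by
        exact_mod_cast Nat.le_of_lt_succ (Finset.mem_range.mp hk)
      simp only [Complex.sub_re, Complex.natCast_re]
      have : ((1:ℂ)/2).re = 1/2 := by norm_num
      rw [this]
      linarith
    -- key pointwise identity on Ioi 0
    have key : EqOn
        (fun t : ℝ => (t : ℂ) ^ (s - 1) * (Real.exp (-t * c ^ 2) : ℂ) *
            ∫ l : ℝ, (Real.exp (-t * l ^ 2) : ℂ) *
              ∑ k ∈ Finset.range (N+1), a k * (Complex.I * l) ^ (2*k))
        (fun t : ℝ => ∑ k ∈ Finset.range (N+1), coef k * g k t) (Ioi 0) := by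
      intro t ht
      have ht' : (0:ℝ) < t := ht
      have ht0 : (t:ℂ) ≠ 0 := by exact_mod_cast ht'.ne'
      have hinner : (∫ l : ℝ, (Real.exp (-t * l ^ 2) : ℂ) *
              ∑ k ∈ Finset.range (N+1), a k * (Complex.I * l) ^ (2*k))
          = ∑ k ∈ Finset.range (N+1),
              a k * (-1)^k * ((Real.Gamma ((k:ℝ) + 1/2) * t ^ (-((k:ℝ) + 1/2)) : ℝ) : ℂ) := by
        have e1 : (fun l : ℝ => (Real.exp (-t * l ^ 2) : ℂ) *
              ∑ k ∈ Finset.range (N+1), a k * (Complex.I * l) ^ (2*k))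
            = fun l : ℝ => ∑ k ∈ Finset.range (N+1),
                (Real.exp (-t * l ^ 2) : ℂ) * (a k * (Complex.I * l) ^ (2*k)) := by
          funext l; rw [Finset.mul_sum]
        rw [e1, integral_finset_sum _ (fun k _ => term_integrable ht' (a k) k)]
        exact Finset.sum_congr rfl (fun k _ => term_integral ht' (a k) k)
      simp only []
      rw [hinner, Finset.mul_sum]
      refine Finset.sum_congr rfl (fun k _ => ?_)
      simp only [hcoef, hg]
      rw [Complex.ofReal_mul, Complex.ofReal_cpow ht'.le]
      rw [show ((-((k:ℝ)+1/2) : ℝ) : ℂ) = -((k:ℂ)+1/2) by push_cast; ring]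
      rw [show (s - (k:ℂ) - 1/2) - 1 = (s-1) + -((k:ℂ)+1/2) by ring,
        Complex.cpow_add _ _ ht0, show -(c^2*t) = -t*c^2 by ring]
      push_cast
      ring
    have hInt : IntegrableOn (fun t : ℝ => ∑ k ∈ Finset.range (N+1), coef k * g k t) (Ioi 0) := by
      apply MeasureTheory.integrable_finset_sum
      intro k hk
      exact ((gammaInt (hre k hk) hc2).const_mul (coef k))
    constructor
    · exact hInt.congr_fun key.symm measurableSet_Ioi
    · rw [setIntegral_congr_fun measurableSet_Ioi key]
      rw [integral_finset_sum _ (fun k hk => ((gammaInt (hre k hk) hc2).const_mul (coef k)))]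
      refine Finset.sum_congr rfl (fun k hk => ?_)
      rw [MeasureTheory.integral_const_mul]
      have hval : (∫ t in Ioi (0:ℝ), g k t)
          = (1/(c^2:ℝ) : ℂ) ^ (s - k - 1/2) * Complex.Gamma (s - k - 1/2) := by
        have := Complex.integral_cpow_mul_exp_neg_mul_Ioi (hre k hk) hc2
        rw [← this]
        refine setIntegral_congr_fun measurableSet_Ioi (fun t ht => ?_)
        simp only [hg]
        congr 1
        rw [Complex.ofReal_exp]
        congr 1
        push_cast
        ring
      rw [hval]
      have hpow : (1/(c^2:ℝ) : ℂ) ^ (s - k - 1/2) = (c : ℂ) ^ ((2*(k:ℂ)+1) - 2*s) := by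
        have h1 : ((1/c^2 : ℝ) : ℂ) = (1/(c^2:ℝ) : ℂ) := by push_cast; ring
        rw [← h1, cpow_pos_eq (by positivity) _, cpow_pos_eq hc _]
        congr 1
        rw [show Real.log (1/c^2) = -(2 * Real.log c) by
          rw [one_div, Real.log_inv, Real.log_pow]; push_cast; ring]
        push_cast
        ring
      rw [hpow]
      ring
  · -- Part 2: holomorphy at s = 0
    apply DifferentiableAt.fun_sum
    intro k _
    have hne : ∀ m : ℕ, ((0:ℂ) - k - 1/2) ≠ -m := by
      intro m h
      have h2 := congrArg Complex.re h
      simp [Complex.sub_re, Complex.div_re] at h2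
      have : (2*(k:ℝ) + 1) = 2*m := by linarith
      have : ((2*k+1 : ℕ) : ℝ) = ((2*m : ℕ) : ℝ) := by push_cast; linarith
      have := Nat.cast_injective this
      omega
    have hg1 : DifferentiableAt ℂ (fun s : ℂ => Complex.Gamma (s - k - 1/2)) 0 := by
      have := Complex.differentiableAt_Gamma _ hne
      exact this.comp 0 ((differentiableAt_fun_id.sub_const (k:ℂ)).sub_const (1/2))
    have hg2 : DifferentiableAt ℂ (fun s : ℂ => (c:ℂ) ^ ((2*(k:ℂ)+1) - 2*s)) 0 := by
      apply DifferentiableAt.const_cpow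
      · exact (differentiableAt_const _).sub (differentiableAt_fun_id.const_mul 2)
      · exact Or.inl (by exact_mod_cast hc.ne')
    exact ((differentiableAt_const _).mul hg1).mul hg2
  · -- Part 3: value at s = 0
    have hint : ∀ k ∈ Finset.range (N+1), IntervalIntegrable
        (fun l : ℝ => a k * (l:ℂ)^(2*k)) volume 0 c := by
      intro k _
      exact (Continuous.intervalIntegrable (by continuity) 0 c)
    rw [intervalIntegral.integral_finset_sum hint, Finset.mul_sum]
    refine Finset.sum_congr rfl (fun k _ => ?_)
    rw [intervalIntegral.integral_const_mul]
    have h1 : (∫ l in (0:ℝ)..c, (l:ℂ)^(2*k)) = ((c^(2*k+1)/(2*k+1) : ℝ) : ℂ) := by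
      have : (fun l:ℝ => ((l:ℂ))^(2*k)) = fun l:ℝ => ((l^(2*k) : ℝ) : ℂ) := by
        funext l; push_cast; ring
      rw [this, intervalIntegral.integral_ofReal, integral_pow]
      norm_num
    rw [h1]
    have hsign : ((-1:ℂ))^k * (-1:ℂ)^(k+1) = -1 := by
      rw [← pow_add]; exact Odd.neg_one_pow ⟨k, by ring⟩
    have hg := congrArg (fun x : ℝ => (x : ℂ)) (gammaProd k)
    simp only [Complex.ofReal_mul, Complex.ofReal_div, Complex.ofReal_pow,
      Complex.ofReal_neg, Complex.ofReal_one, Complex.ofReal_add, Complex.ofReal_ofNat,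
      Complex.ofReal_natCast] at hg
    have hk : ((2*k+1 : ℝ) : ℂ) ≠ 0 := by
      exact_mod_cast (by positivity : (2*(k:ℝ)+1) ≠ 0)
    push_cast at hk ⊢
    rw [show ((-1:ℂ))^k * a k * (Real.Gamma ((k:ℝ)+1/2) : ℂ) * (Real.Gamma (-(k:ℝ)-1/2) : ℂ)
        * (c:ℂ)^(2*k+1)
        = (-1:ℂ)^k * ((Real.Gamma ((k:ℝ)+1/2) : ℂ) * (Real.Gamma (-(k:ℝ)-1/2) : ℂ)) * a k
          * (c:ℂ)^(2*k+1) by ring, hg]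
    linear_combination (2*(π:ℂ)*(c:ℂ)^(2*k+1) * a k / (2*(k:ℂ)+1)) * hsign
end

section
/- Let n ≥ 1 and set ρ_j := n + 1 − j for j = 1, …, n+1. Let τ_1 ≥ τ_2 ≥ … ≥ τ_n ≥ |τ_{n+1}| be real numbers and let k_2, …, k_{n+1} be real numbers with |k_j| ≤ τ_{j−1} + 1 for j = 2, …, n+1. Then Σ_{j=1}^{n+1} (τ_j + ρ_j)² − Σ_{j=2}^{n+1} (k_j + ρ_j)² ≥ τ_{n+1}². If moreover k_{n+1} = 0, then Σ_{j=1}^{n+1} (τ_j + ρ_j)² − Σ_{j=2}^{n+1} (k_j + ρ_j)² ≥ (τ_n + 1)² + τ_{n+1}². -/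
open Finset

/-- Arithmetic core of Lemma 7.1(2) for `G = Spin(2n+1,1)`, with `ρ_j = n+1-j`:
if `τ_1 ≥ … ≥ τ_n ≥ |τ_{n+1}|` and `|k_j| ≤ τ_{j-1}+1`, then
`Σ_{j=1}^{n+1}(τ_j+ρ_j)² - Σ_{j=2}^{n+1}(k_j+ρ_j)² ≥ τ_{n+1}²`, and if moreover
`k_{n+1} = 0` then it is `≥ (τ_n+1)² + τ_{n+1}²`. -/
theorem stmt13 (n : ℕ) (hn : 1 ≤ n) (τ k : ℕ → ℝ)
    (hτ : ∀ j, 1 ≤ j → j + 1 ≤ n → τ (j+1) ≤ τ j)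
    (hτn : |τ (n+1)| ≤ τ n)
    (hk : ∀ j, 2 ≤ j → j ≤ n+1 → |k j| ≤ τ (j-1) + 1) :
    τ (n+1) ^ 2 ≤
      (∑ j ∈ Finset.Icc 1 (n+1), (τ j + ((n:ℝ) + 1 - j)) ^ 2) -
        ∑ j ∈ Finset.Icc 2 (n+1), (k j + ((n:ℝ) + 1 - j)) ^ 2 ∧
    (k (n+1) = 0 →
      (τ n + 1) ^ 2 + τ (n+1) ^ 2 ≤
        (∑ j ∈ Finset.Icc 1 (n+1), (τ j + ((n:ℝ) + 1 - j)) ^ 2) -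
          ∑ j ∈ Finset.Icc 2 (n+1), (k j + ((n:ℝ) + 1 - j)) ^ 2) := by
  set f : ℕ → ℝ := fun j => (τ j + ((n:ℝ) + 1 - j)) ^ 2 with hf
  set g : ℕ → ℝ := fun j => (k j + ((n:ℝ) + 1 - j)) ^ 2 with hg
  have hτn0 : 0 ≤ τ n := le_trans (abs_nonneg _) hτn
  have hmono : ∀ i j, 1 ≤ i → i ≤ j → j ≤ n → τ j ≤ τ i := by
    intro i j h1 hij hjn
    induction j, hij using Nat.le_induction with
    | base => exact le_refl _
    | succ m hm ih =>
      exact le_trans (hτ m (by omega) (by omega)) (ih (by omega))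
  have hpos : ∀ i, 1 ≤ i → i ≤ n → 0 ≤ τ i := fun i h1 h2 =>
    le_trans hτn0 (hmono i n h1 h2 le_rfl)
  have hterm : ∀ j, 2 ≤ j → j ≤ n + 1 → g j ≤ f (j - 1) := by
    intro j h2 hj
    have hcast : ((j - 1 : ℕ) : ℝ) = (j : ℝ) - 1 := by
      have : 1 ≤ j := by omega
      push_cast [this]; ring
    have hjr : (j : ℝ) ≤ (n : ℝ) + 1 := by exact_mod_cast hj
    have hkj := hk j h2 hj
    rw [abs_le] at hkj
    have hτj : 0 ≤ τ (j - 1) := hpos (j - 1) (by omega) (by omega)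
    simp only [hf, hg, hcast]
    apply sq_le_sq'
    · linarith [hkj.1, hkj.2]
    · linarith [hkj.1, hkj.2]
  have hshift : ∀ N : ℕ, ∑ j ∈ Icc 2 (N + 1), f (j - 1) = ∑ j ∈ Icc 1 N, f j := by
    intro N
    apply Finset.sum_nbij' (fun j => j - 1) (fun j => j + 1) <;>
      intros <;> simp_all [Finset.mem_Icc] <;> omega
  have hfn1 : f (n + 1) = τ (n + 1) ^ 2 := by
    simp only [hf]; push_cast; ring_nf
  have hfn : f n = (τ n + 1) ^ 2 := by
    simp only [hf]; ring_nf
  have hS : ∑ j ∈ Icc 1 (n + 1), f j = (∑ j ∈ Icc 1 n, f j) + f (n + 1) :=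
    Finset.sum_Icc_succ_top (by omega) f
  constructor
  · have hTle : ∑ j ∈ Icc 2 (n + 1), g j ≤ ∑ j ∈ Icc 1 n, f j := by
      rw [← hshift n]
      exact Finset.sum_le_sum fun j hj => by
        rw [Finset.mem_Icc] at hj; exact hterm j hj.1 hj.2
    have := hS
    simp only [hf, hg] at hTle hS hfn1 ⊢
    linarith [hfn1]
  · intro hk0
    have hT : ∑ j ∈ Icc 2 (n + 1), g j = (∑ j ∈ Icc 2 n, g j) + g (n + 1) :=
      Finset.sum_Icc_succ_top (by omega) g
    have hgn1 : g (n + 1) = 0 := by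
      simp only [hg, hk0]; push_cast; ring_nf
    have hTle : ∑ j ∈ Icc 2 n, g j ≤ ∑ j ∈ Icc 1 (n - 1), f j := by
      have h1 : ∑ j ∈ Icc 2 (n - 1 + 1), g j ≤ ∑ j ∈ Icc 2 (n - 1 + 1), f (j - 1) := by
        apply Finset.sum_le_sum
        intro j hj
        rw [Finset.mem_Icc] at hj
        exact hterm j hj.1 (by omega)
      rw [hshift (n - 1)] at h1
      rwa [show n - 1 + 1 = n by omega] at h1
    have hS' : ∑ j ∈ Icc 1 n, f j = (∑ j ∈ Icc 1 (n - 1), f j) + f n := by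
      have h2 := Finset.sum_Icc_succ_top (a := 1) (b := n - 1) (by omega) f
      rwa [show n - 1 + 1 = n by omega] at h2
    simp only [hf, hg] at hT hTle hS hS' hfn1 hfn hgn1 ⊢
    linarith [hfn1, hfn]
end

section
/- Let n ≥ 1 and set ρ_j := n + 3/2 − j for j = 1, …, n+1. Let τ_1 ≥ τ_2 ≥ … ≥ τ_{n+1} ≥ 0 be real numbers and let k_2, …, k_{n+1} be real numbers with |k_j| ≤ τ_{j−1} + 1 for j = 2, …, n+1. Then Σ_{j=1}^{n+1} (τ_j + ρ_j)² − Σ_{j=2}^{n+1} (k_j + ρ_j)² ≥ (τ_{n+1} + 1/2)² ≥ 1/4. -/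
open Finset

/-- Arithmetic core of Lemma 7.1(1) for `G = Spin(2n+2,1)`, with `ρ_j = n+3/2-j`:
if `τ_1 ≥ … ≥ τ_{n+1} ≥ 0` and `|k_j| ≤ τ_{j-1}+1`, then
`Σ_{j=1}^{n+1}(τ_j+ρ_j)² - Σ_{j=2}^{n+1}(k_j+ρ_j)² ≥ (τ_{n+1}+1/2)² ≥ 1/4`. -/
theorem stmt14 (n : ℕ) (hn : 1 ≤ n) (τ k : ℕ → ℝ)
    (hτ : ∀ j, 1 ≤ j → j + 1 ≤ n + 1 → τ (j+1) ≤ τ j)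
    (hτpos : 0 ≤ τ (n+1))
    (hk : ∀ j, 2 ≤ j → j ≤ n+1 → |k j| ≤ τ (j-1) + 1) :
    (τ (n+1) + 1/2) ^ 2 ≤
      (∑ j ∈ Finset.Icc 1 (n+1), (τ j + ((n:ℝ) + 3/2 - j)) ^ 2) -
        ∑ j ∈ Finset.Icc 2 (n+1), (k j + ((n:ℝ) + 3/2 - j)) ^ 2 ∧
    (1/4 : ℝ) ≤ (τ (n+1) + 1/2) ^ 2 := by
  constructor
  · -- pair term j of the k-sum with term j-1 of the τ-sum
    have hsum : ∑ j ∈ Finset.Icc 2 (n+1), (k j + ((n:ℝ) + 3/2 - j)) ^ 2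
        ≤ ∑ j ∈ Finset.Icc 1 n, (τ j + ((n:ℝ) + 3/2 - j)) ^ 2 := by
      have hre : ∑ j ∈ Finset.Icc 1 n, (τ j + ((n:ℝ) + 3/2 - j)) ^ 2
          = ∑ j ∈ Finset.Icc 2 (n+1), (τ (j-1) + ((n:ℝ) + 3/2 - ((j:ℝ) - 1))) ^ 2 := by
        apply Finset.sum_nbij' (fun i => i + 1) (fun j => j - 1)
        · intro a ha; simp only [Finset.mem_Icc] at *; omega
        · intro a ha; simp only [Finset.mem_Icc] at *; omega
        · intro a ha; simp only [Finset.mem_Icc] at *; omega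
        · intro a ha; simp only [Finset.mem_Icc] at ha; omega
        · intro a ha
          simp only [Nat.add_sub_cancel]
          push_cast
          ring_nf
      rw [hre]
      apply Finset.sum_le_sum
      intro j hj
      simp only [Finset.mem_Icc] at hj
      have h2 : 2 ≤ j := hj.1
      have h3 : j ≤ n + 1 := hj.2
      have hkj := hk j h2 h3
      rw [abs_le] at hkj
      have hrho : (1:ℝ) ≤ (n:ℝ) + 3/2 - ((j:ℝ) - 1) := by
        have : (j:ℝ) ≤ (n:ℝ) + 1 := by exact_mod_cast h3
        linarith
      apply sq_le_sq'
      · linarith [hkj.1]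
      · linarith [hkj.2]
    have hsplit : ∑ j ∈ Finset.Icc 1 (n+1), (τ j + ((n:ℝ) + 3/2 - j)) ^ 2
        = (∑ j ∈ Finset.Icc 1 n, (τ j + ((n:ℝ) + 3/2 - j)) ^ 2)
          + (τ (n+1) + ((n:ℝ) + 3/2 - ((n:ℕ)+1 : ℕ))) ^ 2 := by
      rw [Finset.sum_Icc_succ_top (by omega : 1 ≤ n + 1)]
    have hlast : (τ (n+1) + ((n:ℝ) + 3/2 - ((n:ℕ)+1 : ℕ))) ^ 2 = (τ (n+1) + 1/2) ^ 2 := by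
      push_cast; ring_nf
    rw [hsplit, hlast]
    linarith
  · nlinarith [hτpos]
end

section
/- Let n ≥ 1 and set ρ_j := n + 1 − j for j = 2, …, n+1. For each j = 2, …, n+1 let a_j, b_j be integers with 0 ≤ a_j ≤ b_j. Define, for z ∈ ℂ, c(z) := Π_{j=2}^{n+1} [ Γ(iz − a_j − ρ_j) Γ(iz + a_j + ρ_j) ] / [ Γ(iz − b_j − ρ_j) Γ(iz + b_j + ρ_j + 1) ], where Γ is the complex Gamma function. Then for every real z ≠ 0 the function c is complex-differentiable at z, c(z) ≠ 0, and c′(z)/c(z) = Σ_{j=2}^{n+1} ( Σ_{l=a_j+1}^{b_j} i/(iz − l − ρ_j) − Σ_{l=a_j}^{b_j} i/(iz + l + ρ_j) ). -/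
open Finset

/-- The Gamma-quotient `c`-function of `Spin(2n+1,1)` (with `ρ_j = n+1-j`, `a_j = |k_j(σ)|`,
`b_j = k_j(ν)`). -/
noncomputable def cfun (n : ℕ) (a b : ℕ → ℕ) : ℂ → ℂ := fun z =>
  ∏ j ∈ Finset.Icc 2 (n+1),
    (Complex.Gamma (Complex.I * z - (a j : ℂ) - (((n:ℝ) + 1 - j : ℝ) : ℂ)) *
      Complex.Gamma (Complex.I * z + (a j : ℂ) + (((n:ℝ) + 1 - j : ℝ) : ℂ))) /
    (Complex.Gamma (Complex.I * z - (b j : ℂ) - (((n:ℝ) + 1 - j : ℝ) : ℂ)) *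
      Complex.Gamma (Complex.I * z + (b j : ℂ) + (((n:ℝ) + 1 - j : ℝ) : ℂ) + 1))

open Complex in
lemma myGamma_ne {w : ℂ} (hw : w.im ≠ 0) : Complex.Gamma w ≠ 0 := by
  apply Complex.Gamma_ne_zero
  intro m h
  apply hw
  rw [h]; simp

lemma gammaA (u : ℂ) (hu : u.im ≠ 0) (ρ : ℝ) (a : ℕ) :
    ∀ b, a ≤ b → Complex.Gamma (u - a - ρ) =
      (∏ l ∈ Finset.Icc (a+1) b, (u - l - ρ)) * Complex.Gamma (u - b - ρ) := by
  intro b hb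
  induction b, hb using Nat.le_induction with
  | base => rw [Finset.Icc_eq_empty (by omega)]; simp
  | succ b hb ih =>
    have hne : u - ((b:ℂ)+1) - ρ ≠ 0 := by
      intro h
      have := congrArg Complex.im h
      simp at this
      exact hu this
    have key := Complex.Gamma_add_one _ hne
    have harg : u - ((b:ℂ)+1) - ρ + 1 = u - b - ρ := by ring
    rw [harg] at key
    rw [ih, key, Finset.prod_Icc_succ_top (by omega)]
    push_cast
    ring

lemma gammaB (u : ℂ) (hu : u.im ≠ 0) (ρ : ℝ) (a : ℕ) :
    ∀ b, a ≤ b → Complex.Gamma (u + b + ρ + 1) =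
      (∏ l ∈ Finset.Icc a b, (u + l + ρ)) * Complex.Gamma (u + a + ρ) := by
  intro b hb
  induction b, hb using Nat.le_induction with
  | base =>
    have hne : u + (a:ℂ) + ρ ≠ 0 := by
      intro h
      have := congrArg Complex.im h
      simp at this
      exact hu this
    have key := Complex.Gamma_add_one _ hne
    rw [Finset.Icc_self, Finset.prod_singleton, key]
  | succ b hb ih =>
    have hne : u + ((b:ℂ)+1) + ρ ≠ 0 := by
      intro h
      have := congrArg Complex.im h
      simp at this
      exact hu this
    have key := Complex.Gamma_add_one _ hne
    have harg : u + ((b:ℂ)+1) + ρ + 1 = u + b + ρ + 1 + 1 := by ring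
    rw [Finset.prod_Icc_succ_top (by omega)]
    push_cast
    rw [key, show u + ((b:ℂ)+1) + (ρ:ℂ) = u + (b:ℂ) + ρ + 1 from by ring, ih]
    ring

lemma logDeriv_aff1 (c d x : ℂ) :
    logDeriv (fun w : ℂ => Complex.I * w - c - d) x = Complex.I / (Complex.I * x - c - d) := by
  have h : HasDerivAt (fun w : ℂ => Complex.I * w - c - d) Complex.I x := by
    simpa using (((hasDerivAt_id x).const_mul Complex.I).sub_const c).sub_const d
  rw [logDeriv_apply, h.deriv]

lemma logDeriv_aff2 (c d x : ℂ) :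
    logDeriv (fun w : ℂ => Complex.I * w + c + d) x = Complex.I / (Complex.I * x + c + d) := by
  have h : HasDerivAt (fun w : ℂ => Complex.I * w + c + d) Complex.I x := by
    simpa using (((hasDerivAt_id x).const_mul Complex.I).add_const c).add_const d
  rw [logDeriv_apply, h.deriv]

noncomputable def gfun (n : ℕ) (a b : ℕ → ℕ) : ℂ → ℂ := fun w =>
  ∏ j ∈ Finset.Icc 2 (n+1),
    (∏ l ∈ Finset.Icc (a j + 1) (b j), (Complex.I * w - (l : ℂ) - (((n:ℝ) + 1 - j : ℝ) : ℂ))) /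
    (∏ l ∈ Finset.Icc (a j) (b j), (Complex.I * w + (l : ℂ) + (((n:ℝ) + 1 - j : ℝ) : ℂ)))

lemma cfun_eq_gfun (n : ℕ) (a b : ℕ → ℕ) (hab : ∀ j, a j ≤ b j) (w : ℂ) (hw : w.re ≠ 0) :
    cfun n a b w = gfun n a b w := by
  have hu : (Complex.I * w).im ≠ 0 := by simpa [Complex.mul_im] using hw
  unfold cfun gfun
  refine Finset.prod_congr rfl fun j hj => ?_
  set u := Complex.I * w with hudef
  set ρ : ℝ := ((n:ℝ) + 1 - j) with hρ
  have hA := gammaA u hu ρ (a j) (b j) (hab j)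
  have hB := gammaB u hu ρ (a j) (b j) (hab j)
  rw [hA, hB]
  have hG1 : Complex.Gamma (u - (b j : ℂ) - (ρ:ℂ)) ≠ 0 := by
    apply myGamma_ne; simpa using hu
  have hG2 : Complex.Gamma (u + (a j : ℂ) + (ρ:ℂ)) ≠ 0 := by
    apply myGamma_ne; simpa using hu
  have hQ : (∏ l ∈ Finset.Icc (a j) (b j), (u + (l : ℂ) + (ρ:ℂ))) ≠ 0 := by
    refine Finset.prod_ne_zero_iff.2 fun l _ => ?_
    intro h
    have := congrArg Complex.im h
    simp at this
    exact hu this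
  field_simp

/-- Identity `(Glcfnktn)`: for real `z ≠ 0` the `c`-function is differentiable and nonzero
at `z`, and its logarithmic derivative is the displayed sum of simple fractions. -/
theorem stmt15 (n : ℕ) (hn : 1 ≤ n) (a b : ℕ → ℕ) (hab : ∀ j, a j ≤ b j)
    (z : ℝ) (hz : z ≠ 0) :
    DifferentiableAt ℂ (cfun n a b) (z : ℂ) ∧ cfun n a b (z : ℂ) ≠ 0 ∧
    deriv (cfun n a b) (z : ℂ) / cfun n a b (z : ℂ) =
      ∑ j ∈ Finset.Icc 2 (n+1),
        ((∑ l ∈ Finset.Icc (a j + 1) (b j),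
            Complex.I / (Complex.I * z - (l : ℂ) - (((n:ℝ) + 1 - j : ℝ) : ℂ))) -
          ∑ l ∈ Finset.Icc (a j) (b j),
            Complex.I / (Complex.I * z + (l : ℂ) + (((n:ℝ) + 1 - j : ℝ) : ℂ))) := by
  have key1 : ∀ (c : ℝ) (l : ℕ), Complex.I * (z:ℂ) - (l:ℂ) - (c:ℂ) ≠ 0 := by
    intro c l h
    have := congrArg Complex.im h
    simp [Complex.mul_im] at this
    exact hz this
  have key2 : ∀ (c : ℝ) (l : ℕ), Complex.I * (z:ℂ) + (l:ℂ) + (c:ℂ) ≠ 0 := by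
    intro c l h
    have := congrArg Complex.im h
    simp [Complex.mul_im] at this
    exact hz this
  have hPdiff : ∀ j : ℕ, DifferentiableAt ℂ
      (fun w => ∏ l ∈ Finset.Icc (a j + 1) (b j),
        (Complex.I * w - (l : ℂ) - (((n:ℝ) + 1 - j : ℝ) : ℂ))) (z:ℂ) :=
    fun j => DifferentiableAt.fun_finsetProd fun l _ => by fun_prop
  have hQdiff : ∀ j : ℕ, DifferentiableAt ℂ
      (fun w => ∏ l ∈ Finset.Icc (a j) (b j),
        (Complex.I * w + (l : ℂ) + (((n:ℝ) + 1 - j : ℝ) : ℂ))) (z:ℂ) :=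
    fun j => DifferentiableAt.fun_finsetProd fun l _ => by fun_prop
  have hPne : ∀ j : ℕ, (∏ l ∈ Finset.Icc (a j + 1) (b j),
      (Complex.I * (z:ℂ) - (l : ℂ) - (((n:ℝ) + 1 - j : ℝ) : ℂ))) ≠ 0 :=
    fun j => Finset.prod_ne_zero_iff.2 fun l _ => key1 _ l
  have hQne : ∀ j : ℕ, (∏ l ∈ Finset.Icc (a j) (b j),
      (Complex.I * (z:ℂ) + (l : ℂ) + (((n:ℝ) + 1 - j : ℝ) : ℂ))) ≠ 0 :=
    fun j => Finset.prod_ne_zero_iff.2 fun l _ => key2 _ l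
  have hjdiff : ∀ j : ℕ, DifferentiableAt ℂ
      (fun w => (∏ l ∈ Finset.Icc (a j + 1) (b j),
          (Complex.I * w - (l : ℂ) - (((n:ℝ) + 1 - j : ℝ) : ℂ))) /
        (∏ l ∈ Finset.Icc (a j) (b j),
          (Complex.I * w + (l : ℂ) + (((n:ℝ) + 1 - j : ℝ) : ℂ)))) (z:ℂ) :=
    fun j => (hPdiff j).div (hQdiff j) (hQne j)
  have hjne : ∀ j : ℕ, ((∏ l ∈ Finset.Icc (a j + 1) (b j),
      (Complex.I * (z:ℂ) - (l : ℂ) - (((n:ℝ) + 1 - j : ℝ) : ℂ))) /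
      (∏ l ∈ Finset.Icc (a j) (b j),
        (Complex.I * (z:ℂ) + (l : ℂ) + (((n:ℝ) + 1 - j : ℝ) : ℂ)))) ≠ 0 :=
    fun j => div_ne_zero (hPne j) (hQne j)
  have hgdiff : DifferentiableAt ℂ (gfun n a b) (z:ℂ) := by
    unfold gfun
    exact DifferentiableAt.fun_finsetProd fun j _ => hjdiff j
  have hgne : gfun n a b (z:ℂ) ≠ 0 := by
    unfold gfun
    exact Finset.prod_ne_zero_iff.2 fun j _ => hjne j
  have hmem : {w : ℂ | w.re ≠ 0} ∈ nhds (z:ℂ) := by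
    have hopen : IsOpen {w : ℂ | w.re ≠ 0} := isOpen_ne.preimage Complex.continuous_re
    exact hopen.mem_nhds (by simpa using hz)
  have hev : cfun n a b =ᶠ[nhds (z:ℂ)] gfun n a b := by
    filter_upwards [hmem] with w hw
    exact cfun_eq_gfun n a b hab w hw
  have hlog : logDeriv (gfun n a b) (z:ℂ) =
      ∑ j ∈ Finset.Icc 2 (n+1),
        ((∑ l ∈ Finset.Icc (a j + 1) (b j),
            Complex.I / (Complex.I * z - (l : ℂ) - (((n:ℝ) + 1 - j : ℝ) : ℂ))) -
          ∑ l ∈ Finset.Icc (a j) (b j),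
            Complex.I / (Complex.I * z + (l : ℂ) + (((n:ℝ) + 1 - j : ℝ) : ℂ))) := by
    unfold gfun
    rw [logDeriv_prod (fun j _ => hjne j) (fun j _ => hjdiff j)]
    refine Finset.sum_congr rfl fun j hj => ?_
    rw [logDeriv_div ((z:ℝ):ℂ) (hPne j) (hQne j) (hPdiff j) (hQdiff j)]
    congr 1
    · rw [logDeriv_prod (s := Finset.Icc (a j + 1) (b j))
        (f := fun (l : ℕ) (w : ℂ) => Complex.I * w - (l:ℂ) - (((n:ℝ) + 1 - j : ℝ):ℂ)) (x := ((z:ℝ):ℂ))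
        (fun l _ => key1 _ l) (fun l _ => by fun_prop)]
      exact Finset.sum_congr rfl fun l _ => logDeriv_aff1 _ _ _
    · rw [logDeriv_prod (s := Finset.Icc (a j) (b j))
        (f := fun (l : ℕ) (w : ℂ) => Complex.I * w + (l:ℂ) + (((n:ℝ) + 1 - j : ℝ):ℂ)) (x := ((z:ℝ):ℂ))
        (fun l _ => key2 _ l) (fun l _ => by fun_prop)]
      exact Finset.sum_congr rfl fun l _ => logDeriv_aff2 _ _ _
  refine ⟨hgdiff.congr_of_eventuallyEq hev, ?_, ?_⟩
  · rw [cfun_eq_gfun n a b hab _ (by simpa using hz)]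
    exact hgne
  · rw [hev.deriv_eq, cfun_eq_gfun n a b hab _ (by simpa using hz), ← logDeriv_apply]
    exact hlog
end

section
/- Let c > 0, h > 0 and C > 0, and let (ℓ_k)_{k∈ℕ} be a sequence of real numbers with ℓ_k ≥ c for all k and #{ k : ℓ_k ≤ R } ≤ C e^{hR} for every R > 0. Then for every t > 0 the series Σ_k e^{−ℓ_k²/(4t)} converges, and there exists a constant C′ > 0 such that Σ_k e^{−ℓ_k²/(4t)} ≤ C′ e^{−c²/(8t)} for all t ∈ (0,1]. -/
open Set

/-- Gaussian-sum estimate from the proof of Proposition `hyperbcontr3`: if `ℓ_k ≥ c > 0`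
and `#{k : ℓ_k ≤ R} ≤ C e^{hR}`, then `Σ_k e^{-ℓ_k²/(4t)}` converges for every `t > 0`
and is `≤ C' e^{-c²/(8t)}` for `t ∈ (0,1]`. -/
theorem stmt16 (c h C : ℝ) (hc : 0 < c) (hh : 0 < h) (hC : 0 < C)
    (ℓ : ℕ → ℝ) (hl : ∀ k, c ≤ ℓ k)
    (hcount : ∀ R : ℝ, 0 < R → {k : ℕ | ℓ k ≤ R}.Finite ∧
      (Nat.card {k : ℕ | ℓ k ≤ R} : ℝ) ≤ C * Real.exp (h * R)) :
    (∀ t : ℝ, 0 < t → Summable (fun k : ℕ => Real.exp (-(ℓ k) ^ 2 / (4 * t)))) ∧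
    ∃ C' : ℝ, 0 < C' ∧ ∀ t ∈ Set.Ioc (0:ℝ) 1,
      (∑' k : ℕ, Real.exp (-(ℓ k) ^ 2 / (4 * t))) ≤ C' * Real.exp (-c ^ 2 / (8 * t)) := by
  set a : ℝ → ℕ → ℝ := fun t n =>
    C * Real.exp (h * (c + n + 1)) * Real.exp (-(c + n) ^ 2 / (4 * t)) with ha_def
  -- summability of the majorant
  have ha_sum : ∀ t : ℝ, 0 < t → Summable (a t) := by
    intro t ht
    have hgeo : Summable (fun n : ℕ =>
        (C * Real.exp (h * (c + 1) + t * (h + 1) ^ 2)) * Real.exp (-1) ^ n) :=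
      (summable_geometric_of_lt_one (Real.exp_nonneg _)
        (by rw [Real.exp_lt_one_iff]; norm_num)).mul_left _
    refine Summable.of_nonneg_of_le (fun n => by positivity) (fun n => ?_) hgeo
    have hexp : (Real.exp (-1) : ℝ) ^ n = Real.exp (-(n : ℝ)) := by
      rw [← Real.exp_nat_mul]; ring_nf
    simp only [ha_def]
    rw [hexp, mul_assoc, ← Real.exp_add, mul_assoc, ← Real.exp_add]
    refine mul_le_mul_of_nonneg_left (Real.exp_le_exp.2 ?_) hC.le
    have h2 : (h + 1) * (n : ℝ) ≤ (n : ℝ) ^ 2 / (4 * t) + t * (h + 1) ^ 2 := by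
      have heq : (n : ℝ) ^ 2 / (4 * t) + t * (h + 1) ^ 2
          = ((n : ℝ) ^ 2 + 4 * t ^ 2 * (h + 1) ^ 2) / (4 * t) := by
        field_simp
      rw [heq, le_div_iff₀ (by positivity)]
      nlinarith [sq_nonneg ((n : ℝ) - 2 * t * (h + 1))]
    have h3 : (n : ℝ) ^ 2 ≤ (c + n) ^ 2 := by
      nlinarith [Nat.cast_nonneg (α := ℝ) n]
    have h4 : (n : ℝ) ^ 2 / (4 * t) ≤ (c + n) ^ 2 / (4 * t) := by
      exact div_le_div_of_nonneg_right h3 (by positivity) |>.trans_eq rfl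
    rw [neg_div]
    linarith
  -- nonnegativity of the majorant
  have ha_nonneg : ∀ t : ℝ, ∀ n : ℕ, 0 ≤ a t n := fun t n => by positivity
  -- key finset bound
  have key : ∀ t : ℝ, 0 < t → ∀ s : Finset ℕ,
      ∑ k ∈ s, Real.exp (-(ℓ k) ^ 2 / (4 * t)) ≤ ∑' n, a t n := by
    intro t ht s
    have hmaps : ∀ k ∈ s, ⌊ℓ k - c⌋₊ ∈ s.image (fun k => ⌊ℓ k - c⌋₊) :=
      fun k hk => Finset.mem_image_of_mem _ hk
    rw [← Finset.sum_fiberwise_of_maps_to hmaps]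
    refine le_trans (Finset.sum_le_sum ?_)
      (Summable.sum_le_tsum _ (fun n _ => ha_nonneg t n) (ha_sum t ht))
    intro n _
    have hfin := (hcount (c + n + 1) (by positivity)).1
    have hcard := (hcount (c + n + 1) (by positivity)).2
    have hfloor : ∀ k ∈ s.filter (fun k => ⌊ℓ k - c⌋₊ = n),
        (n : ℝ) ≤ ℓ k - c ∧ ℓ k - c < n + 1 := by
      intro k hk
      have hk' := (Finset.mem_filter.1 hk).2
      have h0 : (0 : ℝ) ≤ ℓ k - c := sub_nonneg.2 (hl k)
      exact (Nat.floor_eq_iff h0).1 hk'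
    -- each term is at most exp(-(c+n)^2/(4t))
    have hterm : ∀ k ∈ s.filter (fun k => ⌊ℓ k - c⌋₊ = n),
        Real.exp (-(ℓ k) ^ 2 / (4 * t)) ≤ Real.exp (-(c + n) ^ 2 / (4 * t)) := by
      intro k hk
      have h1 : c + (n : ℝ) ≤ ℓ k := by linarith [(hfloor k hk).1]
      have h2 : (c + (n : ℝ)) ^ 2 ≤ (ℓ k) ^ 2 := by
        have hcn : (0 : ℝ) ≤ c + n := by positivity
        nlinarith
      have h4t : (0:ℝ) < 4 * t := by positivity
      have hdiv : -(ℓ k) ^ 2 / (4 * t) ≤ -(c + (n:ℝ)) ^ 2 / (4 * t) := by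
        rw [div_le_div_iff₀ h4t h4t]
        nlinarith [mul_le_mul_of_nonneg_right h2 h4t.le]
      exact Real.exp_le_exp.2 hdiv
    have hsum := Finset.sum_le_card_nsmul _ _ _ hterm
    rw [nsmul_eq_mul] at hsum
    refine hsum.trans ?_
    -- cardinality bound
    have hsub : s.filter (fun k => ⌊ℓ k - c⌋₊ = n) ⊆ hfin.toFinset := by
      intro k hk
      rw [Set.Finite.mem_toFinset]
      simp only [Set.mem_setOf_eq]
      linarith [(hfloor k hk).2]
    have hc1 : ((s.filter (fun k => ⌊ℓ k - c⌋₊ = n)).card : ℝ)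
        ≤ C * Real.exp (h * (c + n + 1)) := by
      refine le_trans ?_ hcard
      rw [Nat.card_coe_set_eq, Set.ncard_eq_toFinset_card _ hfin]
      exact_mod_cast Finset.card_le_card hsub
    calc ((s.filter (fun k => ⌊ℓ k - c⌋₊ = n)).card : ℝ) * Real.exp (-(c + n) ^ 2 / (4 * t))
        ≤ (C * Real.exp (h * (c + n + 1))) * Real.exp (-(c + n) ^ 2 / (4 * t)) :=
          mul_le_mul_of_nonneg_right hc1 (Real.exp_nonneg _)
      _ = a t n := rfl
  -- part 1 : summability
  have hsummable : ∀ t : ℝ, 0 < t → Summable (fun k : ℕ => Real.exp (-(ℓ k) ^ 2 / (4 * t))) := by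
    intro t ht
    exact summable_of_sum_range_le (fun k => Real.exp_nonneg _)
      (fun N => key t ht (Finset.range N))
  refine ⟨hsummable, ∑' n, a 2 n, ?_, ?_⟩
  · have h0 : a 2 0 ≤ ∑' n, a 2 n :=
      Summable.le_tsum (ha_sum 2 (by norm_num)) 0 (fun n _ => ha_nonneg 2 n)
    have : 0 < a 2 0 := by positivity
    linarith
  · intro t ht
    obtain ⟨ht0, ht1⟩ := ht
    have step1 : (∑' k : ℕ, Real.exp (-(ℓ k) ^ 2 / (4 * t))) ≤ ∑' n, a t n :=
      Summable.tsum_le_of_sum_le (hsummable t ht0) (key t ht0)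
    refine step1.trans ?_
    have step2 : ∀ n : ℕ, a t n ≤ Real.exp (-c ^ 2 / (8 * t)) * a 2 n := by
      intro n
      have hkey : -(c + n) ^ 2 / (4 * t) ≤ -c ^ 2 / (8 * t) + -(c + n) ^ 2 / (4 * 2) := by
        have heq : (-c ^ 2 / (8 * t) + -(c + n) ^ 2 / (4 * 2)) - (-(c + n) ^ 2 / (4 * t))
            = (2 * (c + n) ^ 2 - c ^ 2 - t * (c + n) ^ 2) / (8 * t) := by
          field_simp; ring
        have hnum : 0 ≤ 2 * (c + n) ^ 2 - c ^ 2 - t * (c + n) ^ 2 := by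
          nlinarith [sq_nonneg (c + (n : ℝ)), Nat.cast_nonneg (α := ℝ) n,
            mul_nonneg (sub_nonneg.2 ht1) (sq_nonneg (c + (n : ℝ)))]
        nlinarith [div_nonneg hnum (by positivity : (0:ℝ) ≤ 8 * t), heq]
      have : Real.exp (-(c + n) ^ 2 / (4 * t))
          ≤ Real.exp (-c ^ 2 / (8 * t)) * Real.exp (-(c + n) ^ 2 / (4 * 2)) := by
        rw [← Real.exp_add]; exact Real.exp_le_exp.2 hkey
      calc a t n = (C * Real.exp (h * (c + n + 1))) * Real.exp (-(c + n) ^ 2 / (4 * t)) := rfl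
        _ ≤ (C * Real.exp (h * (c + n + 1)))
            * (Real.exp (-c ^ 2 / (8 * t)) * Real.exp (-(c + n) ^ 2 / (4 * 2))) :=
          mul_le_mul_of_nonneg_left this (by positivity)
        _ = Real.exp (-c ^ 2 / (8 * t)) * a 2 n := by simp only [ha_def]; ring_nf
    calc (∑' n, a t n) ≤ ∑' n, Real.exp (-c ^ 2 / (8 * t)) * a 2 n :=
          Summable.tsum_le_tsum step2 (ha_sum t ht0) ((ha_sum 2 (by norm_num)).mul_left _)
      _ = (∑' n, a 2 n) * Real.exp (-c ^ 2 / (8 * t)) := by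
          rw [tsum_mul_left]; ring
end
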